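/- arXiv:1003.1657 — 4 statements merged into one kernel-verified Lean document; each statement's English description precedes it below -/
import Mathlib

section
/- For every fixed α ∈ (0,2), h > 0, and u ∈ ℝ, the map Δ ↦ φ_{α,Δ}(u) is continuous on [0,h]; consequently the family of probability measures F_{α,Δ} with characteristic function φ_{α,Δ} depends continuously on Δ ∈ [0,h] in the weak topology. -/
open MeasureTheory Filter

/-- `[b]_h := max {a ∈ hℤ : a ≤ b}`, the lattice entire part of `b`. -/
noncomputable def latFloor (h b : ℝ) : ℝ := h * (⌊b / h⌋ : ℝ)

/-- The shift constant `C_{α,Δ;τ}` of the limiting semi-stable law. -/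
noncomputable def Cconst (α h Δ τ : ℝ) : ℝ :=
  if α = 1 then h⁻¹ * latFloor h (Real.log τ + Δ)
  else Real.exp (-(α - 1) * (latFloor h (Δ + Real.log τ) - Δ)) / (1 - Real.exp ((α - 1) * h))

/-- The exponent in the Lévy–Khintchine representation of `φ_{α,Δ}`. -/
noncomputable def phiExp (α h Δ τ : ℝ) (u : ℝ) : ℂ :=
  Complex.I * (Cconst α h Δ τ : ℂ) * (u : ℂ) +
    ∑' m : ℤ, (Complex.exp (Complex.I * (u : ℂ) * (Real.exp (h * (m : ℝ) - Δ) : ℂ)) - 1 -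
      Complex.I * (u : ℂ) * (Real.exp (h * (m : ℝ) - Δ) : ℂ) *
        (if Real.exp (h * (m : ℝ) - Δ) < τ then 1 else 0)) *
      (Real.exp (-α * (h * (m : ℝ) - Δ)) : ℂ)

/-- The characteristic function `φ_{α,Δ}` of the limiting semi-stable law. -/
noncomputable def phiFn (α h Δ τ : ℝ) (u : ℝ) : ℂ := Complex.exp (phiExp α h Δ τ u)

lemma expI_bound (θ : ℝ) : ‖Complex.exp ((θ:ℂ) * Complex.I) - 1 - (θ:ℂ) * Complex.I‖ ≤ 3 * θ ^ 2 := by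
  have h2 : ‖((θ:ℂ) * Complex.I)‖ = |θ| := by simp
  rcases le_or_gt |θ| 1 with hθ | hθ
  · have h1 : ‖((θ:ℂ) * Complex.I)‖ ≤ 1 := by rw [h2]; exact hθ
    have := Complex.norm_exp_sub_one_sub_id_le h1
    rw [h2] at this
    calc ‖Complex.exp ((θ:ℂ) * Complex.I) - 1 - (θ:ℂ) * Complex.I‖ ≤ |θ| ^ 2 := this
    _ = θ ^ 2 := sq_abs θ
    _ ≤ 3 * θ ^ 2 := by nlinarith [sq_nonneg θ]
  · have h3 : ‖Complex.exp ((θ:ℂ) * Complex.I)‖ = 1 := by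
      simp [Complex.norm_exp_ofReal_mul_I θ]
    have h4 : |θ| ≤ θ ^ 2 := by nlinarith [abs_nonneg θ, sq_abs θ]
    calc ‖Complex.exp ((θ:ℂ) * Complex.I) - 1 - (θ:ℂ) * Complex.I‖
        ≤ ‖Complex.exp ((θ:ℂ) * Complex.I) - 1‖ + ‖(θ:ℂ) * Complex.I‖ := norm_sub_le _ _
      _ ≤ (‖Complex.exp ((θ:ℂ) * Complex.I)‖ + ‖(1:ℂ)‖) + |θ| := by
          gcongr
          · exact norm_sub_le _ _
          · rw [← h2]
      _ = 2 + |θ| := by rw [h3]; norm_num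
      _ ≤ 3 * θ ^ 2 := by nlinarith

/-- projection of `Δ` to `[0,h]` -/
noncomputable def proj01 (h Δ : ℝ) : ℝ := max 0 (min h Δ)

lemma proj01_mem (h Δ : ℝ) (hh : 0 ≤ h) : proj01 h Δ ∈ Set.Icc 0 h := by
  constructor
  · exact le_max_left _ _
  · rcases le_or_gt h Δ with hc | hc
    · simp [proj01, min_eq_left hc, hh]
    · rcases le_or_gt Δ 0 with hc2 | hc2
      · simp [proj01, min_eq_right hc.le, max_eq_left hc2, hh]
      · simp [proj01, min_eq_right hc.le, max_eq_right hc2.le, hc.le]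

lemma proj01_eq (h Δ : ℝ) (hΔ : Δ ∈ Set.Icc 0 h) : proj01 h Δ = Δ := by
  simp [proj01, min_eq_right hΔ.2, max_eq_right hΔ.1]

lemma proj01_continuous (h : ℝ) : Continuous (proj01 h) := by
  unfold proj01; fun_prop

/-- the `m`-th summand of the exponent, with locally-constant indicator, composed with proj. -/
noncomputable def Gterm (α h u : ℝ) (m : ℤ) (Δ : ℝ) : ℂ :=
  (Complex.exp (Complex.I * (u:ℂ) * (Real.exp (h * (m:ℝ) - proj01 h Δ) : ℂ)) - 1 -
    Complex.I * (u:ℂ) * (Real.exp (h * (m:ℝ) - proj01 h Δ) : ℂ) *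
      (if m ≤ 0 then 1 else 0)) *
    (Real.exp (-α * (h * (m:ℝ) - proj01 h Δ)) : ℂ)

noncomputable def Mbound (α h u : ℝ) (m : ℤ) : ℝ :=
  (3 * u ^ 2 + 2 * Real.exp (α * h)) * Real.exp (-(min α (2-α) * h * |(m:ℝ)|))

lemma Gterm_continuous (α h u : ℝ) (m : ℤ) : Continuous (Gterm α h u m) := by
  unfold Gterm
  have := proj01_continuous h
  fun_prop

lemma Gterm_norm_bound (α h u : ℝ) (hα : α ∈ Set.Ioo (0:ℝ) 2) (hh : 0 < h) (m : ℤ) (Δ : ℝ) :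
    ‖Gterm α h u m Δ‖ ≤ Mbound α h u m := by
  obtain ⟨hΔ0, hΔh⟩ := proj01_mem h Δ hh.le
  set D := proj01 h Δ with hD
  set x := Real.exp (h * (m:ℝ) - D) with hx
  have hxpos : 0 < x := Real.exp_pos _
  have hc : 0 < min α (2-α) * h := by
    apply mul_pos _ hh
    rcases hα with ⟨h1, h2⟩
    exact lt_min h1 (by linarith)
  have hIux : Complex.I * (u:ℂ) * (x:ℂ) = ((u * x : ℝ) : ℂ) * Complex.I := by
    push_cast; ring
  have hnormexp : ‖(Real.exp (-α * (h * (m:ℝ) - D)) : ℂ)‖ = Real.exp (-α * (h * (m:ℝ) - D)) := by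
    rw [Complex.norm_real, Real.norm_eq_abs, Real.abs_exp]
  have hK : (0:ℝ) ≤ 3 * u ^ 2 + 2 * Real.exp (α * h) := by positivity
  rcases le_or_gt m 0 with hm | hm
  · -- small jumps: second order bound
    have hind : (if m ≤ 0 then (1:ℂ) else 0) = 1 := if_pos hm
    have key : ‖Complex.exp (Complex.I * (u:ℂ) * (x:ℂ)) - 1 - Complex.I * (u:ℂ) * (x:ℂ)‖
        ≤ 3 * (u*x) ^ 2 := by
      rw [hIux]; exact expI_bound (u*x)
    have hmabs : |(m:ℝ)| = -(m:ℝ) := abs_of_nonpos (by exact_mod_cast hm)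
    have hmle : (m:ℝ) ≤ 0 := by exact_mod_cast hm
    have hexple : Real.exp ((2-α) * (h * (m:ℝ) - D)) ≤ Real.exp (-(min α (2-α) * h * |(m:ℝ)|)) := by
      apply Real.exp_le_exp.2
      rw [hmabs]
      have h2α : 0 < 2 - α := by rcases hα with ⟨h1, h2⟩; linarith
      have hmin : min α (2-α) ≤ 2 - α := min_le_right _ _
      have hminpos : 0 < min α (2-α) := lt_min hα.1 h2α
      nlinarith [mul_nonneg hh.le (neg_nonneg.2 hmle), mul_nonneg h2α.le hΔ0]
    calc ‖Gterm α h u m Δ‖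
        = ‖Complex.exp (Complex.I * (u:ℂ) * (x:ℂ)) - 1 - Complex.I * (u:ℂ) * (x:ℂ)‖ *
            Real.exp (-α * (h * (m:ℝ) - D)) := by
          rw [Gterm, ← hD, ← hx, hind, mul_one, norm_mul, hnormexp]
      _ ≤ (3 * u^2 * x^2) * Real.exp (-α * (h * (m:ℝ) - D)) := by
          apply mul_le_mul_of_nonneg_right _ (Real.exp_pos _).le
          calc ‖_ - 1 - _‖ ≤ 3 * (u*x)^2 := key
            _ = 3 * u^2 * x^2 := by ring
      _ = 3 * u^2 * Real.exp ((2-α) * (h * (m:ℝ) - D)) := by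
          have e1 : Real.exp ((2-α) * (h * (m:ℝ) - D)) =
              Real.exp (h * (m:ℝ) - D) ^ 2 * Real.exp (-α * (h * (m:ℝ) - D)) := by
            rw [sq, ← Real.exp_add, ← Real.exp_add]; congr 1; ring
          rw [hx, e1]; ring
      _ ≤ (3 * u^2) * Real.exp (-(min α (2-α) * h * |(m:ℝ)|)) := by
          exact mul_le_mul_of_nonneg_left hexple (by positivity)
      _ ≤ Mbound α h u m := by
          rw [Mbound]
          apply mul_le_mul_of_nonneg_right _ (Real.exp_pos _).le
          nlinarith [Real.exp_pos (α * h)]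
  · -- big jumps: first order bound
    have hind : (if m ≤ 0 then (1:ℂ) else 0) = 0 := if_neg (by omega)
    have hnormE : ‖Complex.exp (Complex.I * (u:ℂ) * (x:ℂ))‖ = 1 := by
      rw [hIux]; simpa using Complex.norm_exp_ofReal_mul_I (u*x)
    have key : ‖Complex.exp (Complex.I * (u:ℂ) * (x:ℂ)) - 1‖ ≤ 2 := by
      calc ‖Complex.exp (Complex.I * (u:ℂ) * (x:ℂ)) - 1‖
          ≤ ‖Complex.exp (Complex.I * (u:ℂ) * (x:ℂ))‖ + ‖(1:ℂ)‖ := norm_sub_le _ _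
        _ = 2 := by rw [hnormE]; norm_num
    have hmabs : |(m:ℝ)| = (m:ℝ) := abs_of_pos (by exact_mod_cast hm)
    have hmge : (1:ℝ) ≤ (m:ℝ) := by exact_mod_cast hm
    have hexple : Real.exp (-α * (h * (m:ℝ) - D)) ≤
        Real.exp (α * h) * Real.exp (-(min α (2-α) * h * |(m:ℝ)|)) := by
      rw [← Real.exp_add]
      apply Real.exp_le_exp.2
      rw [hmabs]
      have hmin : min α (2-α) ≤ α := min_le_left _ _
      have hminpos : 0 < min α (2-α) := by
        rcases hα with ⟨h1, h2⟩; exact lt_min h1 (by linarith)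
      nlinarith [mul_nonneg hα.1.le (sub_nonneg.2 hΔh),
        mul_nonneg (mul_nonneg hminpos.le hh.le) (by linarith : (0:ℝ) ≤ (m:ℝ)),
        mul_nonneg hα.1.le hΔ0]
    calc ‖Gterm α h u m Δ‖
        = ‖Complex.exp (Complex.I * (u:ℂ) * (x:ℂ)) - 1‖ * Real.exp (-α * (h * (m:ℝ) - D)) := by
          rw [Gterm, ← hD, ← hx, hind, mul_zero, sub_zero, norm_mul, hnormexp]
      _ ≤ 2 * (Real.exp (α * h) * Real.exp (-(min α (2-α) * h * |(m:ℝ)|))) := by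
          exact mul_le_mul key hexple (Real.exp_pos _).le (by norm_num)
      _ ≤ Mbound α h u m := by
          rw [Mbound]
          rw [← mul_assoc]
          apply mul_le_mul_of_nonneg_right _ (Real.exp_pos _).le
          nlinarith [sq_nonneg u]

lemma Mbound_summable (α h u : ℝ) (hα : α ∈ Set.Ioo (0:ℝ) 2) (hh : 0 < h) :
    Summable (Mbound α h u) := by
  apply Summable.mul_left
  have hc : 0 < min α (2-α) * h := by
    apply mul_pos _ hh
    rcases hα with ⟨h1, h2⟩
    exact lt_min h1 (by linarith)
  set c := min α (2-α) * h with hcdef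
  have hgeom : Summable (fun n : ℕ => Real.exp (-(c * n))) := by
    have : ∀ n : ℕ, Real.exp (-(c * n)) = Real.exp (-c) ^ n := by
      intro n
      rw [← Real.exp_nat_mul]; congr 1; ring
    simp_rw [this]
    exact summable_geometric_of_lt_one (Real.exp_pos _).le
      (Real.exp_lt_one_iff.2 (by linarith))
  apply Summable.of_nat_of_neg
  · simpa using hgeom
  · apply hgeom.congr
    intro n
    congr 2
    simp

noncomputable def Cnice (α h Δ : ℝ) : ℝ :=
  if α = 1 then 0 else Real.exp ((α - 1) * Δ) / (1 - Real.exp ((α - 1) * h))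

noncomputable def Gfun (α h u : ℝ) (Δ : ℝ) : ℂ :=
  Complex.exp (Complex.I * (Cnice α h Δ : ℂ) * (u : ℂ) + ∑' m : ℤ, Gterm α h u m Δ)

lemma Gfun_continuous (α h u : ℝ) (hα : α ∈ Set.Ioo (0:ℝ) 2) (hh : 0 < h) :
    Continuous (Gfun α h u) := by
  apply Complex.continuous_exp.comp
  apply Continuous.add
  · apply Continuous.mul _ continuous_const
    apply continuous_const.mul
    apply Complex.continuous_ofReal.comp
    unfold Cnice
    split_ifs
    · exact continuous_const
    · exact (Real.continuous_exp.comp (continuous_const.mul continuous_id)).div_const _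
  · exact continuous_tsum (Gterm_continuous α h u)
      (Mbound_summable α h u hα hh) (fun m Δ => Gterm_norm_bound α h u hα hh m Δ)

lemma half_notint (h : ℝ) (hh : 0 < h) (m : ℤ) : h / 2 ≠ h * (m : ℝ) := by
  intro hEq
  have h2 : (2 * m : ℝ) = 1 := by
    field_simp at hEq
    nlinarith [hEq]
  have : ((2 * m : ℤ) : ℝ) = ((1 : ℤ) : ℝ) := by push_cast; push_cast at h2; linarith
  have : (2 * m : ℤ) = 1 := by exact_mod_cast this
  omega

lemma tau_admissible (h Δ : ℝ) (hh : 0 < h) (m : ℤ) :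
    Real.exp (h / 2 - Δ) ≠ Real.exp (h * (m : ℝ) - Δ) := by
  intro hEq
  have h1 : h / 2 - Δ = h * (m:ℝ) - Δ := Real.exp_eq_exp.mp hEq
  exact half_notint h hh m (by linarith)

lemma latFloor_half (h : ℝ) (hh : 0 < h) : latFloor h (h / 2) = 0 := by
  rw [latFloor]
  have : h / 2 / h = 1 / 2 := by
    rw [div_div, mul_comm, ← div_div]
    simp [hh.ne']
  rw [this]
  norm_num

set_option maxHeartbeats 1000000 in
lemma phi_eq (α h : ℝ) (hh : 0 < h) (u Δ : ℝ) (hΔ : Δ ∈ Set.Icc 0 h) :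
    phiFn α h Δ (Real.exp (h / 2 - Δ)) u = Gfun α h u Δ := by
  rw [phiFn, Gfun, phiExp]
  congr 1
  have hlog : Real.log (Real.exp (h / 2 - Δ)) = h / 2 - Δ := Real.log_exp _
  congr 1
  · -- constants agree
    rw [Cconst, Cnice]
    split_ifs
    · rw [hlog]
      have : h / 2 - Δ + Δ = h / 2 := by ring
      rw [this, latFloor_half h hh]
      simp
    · rw [hlog]
      have : Δ + (h / 2 - Δ) = h / 2 := by ring
      rw [this, latFloor_half h hh]
      congr 2
      push_cast
      ring_nf
  · -- sums agree
    apply tsum_congr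
    intro m
    rw [Gterm, proj01_eq h Δ hΔ]
    congr 3
    -- indicator equality
    by_cases hm : m ≤ 0
    · rw [if_pos hm, if_pos]
      rw [Real.exp_lt_exp]
      have : (m:ℝ) ≤ 0 := by exact_mod_cast hm
      nlinarith
    · rw [if_neg hm, if_neg]
      rw [Real.exp_lt_exp, not_lt]
      have : (1:ℝ) ≤ (m:ℝ) := by exact_mod_cast (by omega : (1:ℤ) ≤ m)
      nlinarith

-- characteristic function is continuous in the frequency
lemma charFn_continuous (ν : Measure ℝ) [IsProbabilityMeasure ν] :
    Continuous (fun v : ℝ => ∫ x, Complex.exp (Complex.I * (v:ℂ) * (x:ℂ)) ∂ν) := by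
  apply continuous_of_dominated (bound := fun _ => 1)
  · intro v
    apply Continuous.aestronglyMeasurable
    fun_prop
  · intro v
    filter_upwards with x
    have : Complex.I * (v:ℂ) * (x:ℂ) = ((v * x : ℝ):ℂ) * Complex.I := by push_cast; ring
    rw [this, Complex.norm_exp_ofReal_mul_I]
  · exact integrable_const 1
  · filter_upwards with x
    fun_prop

lemma charFn_integrable (ν : Measure ℝ) [IsProbabilityMeasure ν] (v : ℝ) :
    Integrable (fun x : ℝ => Complex.exp (Complex.I * (v:ℂ) * (x:ℂ))) ν := by
  apply Integrable.mono' (integrable_const (1:ℝ))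
  · apply Continuous.aestronglyMeasurable; fun_prop
  · filter_upwards with x
    have : Complex.I * (v:ℂ) * (x:ℂ) = ((v * x : ℝ):ℂ) * Complex.I := by push_cast; ring
    rw [this, Complex.norm_exp_ofReal_mul_I]

lemma charFn_norm_le_one (ν : Measure ℝ) [IsProbabilityMeasure ν] (v : ℝ) :
    ‖∫ x, Complex.exp (Complex.I * (v:ℂ) * (x:ℂ)) ∂ν‖ ≤ 1 := by
  calc ‖∫ x, Complex.exp (Complex.I * (v:ℂ) * (x:ℂ)) ∂ν‖
      ≤ ∫ x, ‖Complex.exp (Complex.I * (v:ℂ) * (x:ℂ))‖ ∂ν := norm_integral_le_integral_norm _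
    _ = ∫ _x, (1:ℝ) ∂ν := by
        apply integral_congr_ae; filter_upwards with x
        have hc : Complex.I * (v:ℂ) * (x:ℂ) = ((v * x : ℝ):ℂ) * Complex.I := by push_cast; ring
        rw [hc, Complex.norm_exp_ofReal_mul_I]
    _ = 1 := by simp

lemma charFn_re (ν : Measure ℝ) [IsProbabilityMeasure ν] (v : ℝ) :
    (∫ x, Complex.exp (Complex.I * (v:ℂ) * (x:ℂ)) ∂ν).re = ∫ x, Real.cos (v * x) ∂ν := by
  rw [← Complex.reCLM_apply, ← ContinuousLinearMap.integral_comp_comm Complex.reCLM (charFn_integrable ν v)]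
  simp only [Complex.reCLM_apply]
  congr 1
  funext x
  have : Complex.I * (v:ℂ) * (x:ℂ) = ((v * x : ℝ):ℂ) * Complex.I := by push_cast; ring
  rw [this, Complex.exp_ofReal_mul_I_re]

lemma one_sub_cos_integrable (ν : Measure ℝ) [IsProbabilityMeasure ν] (v : ℝ) :
    Integrable (fun x : ℝ => 1 - Real.cos (v * x)) ν := by
  apply Integrable.mono' (integrable_const (2:ℝ))
  · apply Continuous.aestronglyMeasurable; fun_prop
  · filter_upwards with x
    rw [Real.norm_eq_abs, abs_le]
    constructor <;> nlinarith [Real.neg_one_le_cos (v*x), Real.cos_le_one (v*x)]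

-- the inner integral, computed
lemma inner_integral_eq (a x : ℝ) (ha : 0 < a) (hx : x ≠ 0) :
    ∫ v in Set.Ioc (-a) a, (1 - Real.cos (v * x)) = 2*a - 2 * Real.sin (a*x) / x := by
  rw [← intervalIntegral.integral_of_le (by linarith : -a ≤ a)]
  have h1 : IntervalIntegrable (fun v : ℝ => Real.cos (v * x)) volume (-a) a := by
    apply Continuous.intervalIntegrable; fun_prop
  rw [intervalIntegral.integral_sub (intervalIntegrable_const) h1]
  rw [intervalIntegral.integral_const]
  have h2 : ∫ v in (-a)..a, Real.cos (v * x) = 2 * Real.sin (a * x) / x := by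
    rw [intervalIntegral.integral_comp_mul_right Real.cos hx]
    rw [integral_cos]
    rw [smul_eq_mul]
    have hcomm : -a * x = -(a*x) := by ring
    rw [hcomm, Real.sin_neg]
    field_simp
    ring
  rw [h2]
  simp
  ring

lemma cos_integrable (ν : Measure ℝ) [IsProbabilityMeasure ν] (v : ℝ) :
    Integrable (fun x : ℝ => Real.cos (v * x)) ν := by
  apply Integrable.mono' (integrable_const (1:ℝ))
  · apply Continuous.aestronglyMeasurable; fun_prop
  · filter_upwards with x
    rw [Real.norm_eq_abs]
    exact Real.abs_cos_le_one _

lemma truncation (ν : Measure ℝ) [IsProbabilityMeasure ν] (a : ℝ) (ha : 0 < a) :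
    a * (ν {x : ℝ | 2/a < |x|}).toReal ≤
      ∫ v in Set.Ioc (-a) a,
        (1 - (∫ x, Complex.exp (Complex.I * (v:ℂ) * (x:ℂ)) ∂ν).re) := by
  set μI := volume.restrict (Set.Ioc (-a) a) with hμI
  haveI : IsFiniteMeasure μI := by
    constructor
    rw [hμI, Measure.restrict_apply_univ, Real.volume_Ioc]
    exact ENNReal.ofReal_lt_top
  have hprod : Integrable (Function.uncurry fun v x : ℝ => 1 - Real.cos (v * x)) (μI.prod ν) := by
    apply Integrable.mono' (integrable_const (2:ℝ))
    · apply Continuous.aestronglyMeasurable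
      have hcont : Continuous fun p : ℝ × ℝ => 1 - Real.cos (p.1 * p.2) := by fun_prop
      exact hcont
    · filter_upwards with p
      simp only [Function.uncurry]
      rw [Real.norm_eq_abs, abs_le]
      constructor <;>
        nlinarith [Real.neg_one_le_cos (p.1 * p.2), Real.cos_le_one (p.1 * p.2)]
  have hswap : ∫ v, (∫ x, (1 - Real.cos (v * x)) ∂ν) ∂μI
      = ∫ x, (∫ v, (1 - Real.cos (v * x)) ∂μI) ∂ν := integral_integral_swap hprod
  have hpt : ∀ v : ℝ, ∫ x, (1 - Real.cos (v * x)) ∂ν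
      = 1 - (∫ x, Complex.exp (Complex.I * (v:ℂ) * (x:ℂ)) ∂ν).re := by
    intro v
    rw [charFn_re, integral_sub (integrable_const 1) (cos_integrable ν v)]
    simp
  have hS : MeasurableSet {x : ℝ | 2/a < |x|} :=
    measurableSet_lt measurable_const continuous_abs.measurable
  have hgint : Integrable (fun x : ℝ => ∫ v, (1 - Real.cos (v * x)) ∂μI) ν :=
    hprod.integral_prod_right
  have hmono : ∀ x : ℝ, Set.indicator {x : ℝ | 2/a < |x|} (fun _ => a) x
      ≤ ∫ v, (1 - Real.cos (v * x)) ∂μI := by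
    intro x
    by_cases hx : x ∈ {x : ℝ | 2/a < |x|}
    · rw [Set.indicator_of_mem hx]
      have hxa : 2/a < |x| := hx
      have hxne : x ≠ 0 := by
        intro h0; rw [h0] at hxa; simp at hxa
        exact absurd hxa (not_lt.mpr (div_pos two_pos ha).le)
      have hgx : ∫ v, (1 - Real.cos (v * x)) ∂μI = 2*a - 2 * Real.sin (a*x) / x :=
        inner_integral_eq a x ha hxne
      rw [hgx]
      have hsin : 2 * Real.sin (a*x) / x ≤ a := by
        have h1 : 2 * Real.sin (a*x) / x ≤ |2 * Real.sin (a*x) / x| := le_abs_self _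
        have h2 : |2 * Real.sin (a*x) / x| = 2 * |Real.sin (a*x)| / |x| := by
          rw [abs_div, abs_mul]; norm_num
        have hxpos : 0 < |x| := abs_pos.mpr hxne
        have h3 : 2 * |Real.sin (a*x)| / |x| ≤ 2 / |x| := by
          gcongr
          nlinarith [abs_le.mpr ⟨Real.neg_one_le_sin (a*x), Real.sin_le_one (a*x)⟩]
        have h4 : 2 / |x| ≤ a := by
          rw [div_le_iff₀ hxpos]
          have h5 : 2 < a * |x| := by
            rw [div_lt_iff₀ ha] at hxa
            nlinarith
          nlinarith
        linarith
      linarith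
    · rw [Set.indicator_of_notMem hx]
      apply integral_nonneg
      intro v
      show (0:ℝ) ≤ 1 - Real.cos (v * x)
      nlinarith [Real.cos_le_one (v * x)]
  calc a * (ν {x : ℝ | 2/a < |x|}).toReal
      = ∫ x, Set.indicator {x : ℝ | 2/a < |x|} (fun _ => a) x ∂ν := by
        rw [integral_indicator_const _ hS, smul_eq_mul, mul_comm]; rfl
    _ ≤ ∫ x, (∫ v, (1 - Real.cos (v * x)) ∂μI) ∂ν :=
        integral_mono ((integrable_const a).indicator hS) hgint hmono
    _ = ∫ v, (∫ x, (1 - Real.cos (v * x)) ∂ν) ∂μI := hswap.symm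
    _ = ∫ v in Set.Ioc (-a) a,
        (1 - (∫ x, Complex.exp (Complex.I * (v:ℂ) * (x:ℂ)) ∂ν).re) := by
        rw [hμI]
        apply integral_congr_ae
        filter_upwards with v
        exact hpt v

lemma trig_approx (f : BoundedContinuousFunction ℝ ℝ) (R ε : ℝ) (hR : 0 < R) (hε : 0 < ε) :
    ∃ (n : ℕ) (c : Fin n → ℂ) (w : Fin n → ℝ),
      (∀ x : ℝ, |x| ≤ R →
        |f x - (∑ i, c i * Complex.exp (Complex.I * (w i : ℂ) * (x:ℂ))).re| ≤ ε) ∧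
      (∀ x : ℝ, |(∑ i, c i * Complex.exp (Complex.I * (w i : ℂ) * (x:ℂ))).re| ≤ ‖f‖ + ε) := by
  set T : ℝ := 2 * R + 4 with hT
  haveI hTfact : Fact (0 < T) := ⟨by linarith⟩
  set aL : ℝ := -(R + 2) with haL
  have haLT : aL + T = R + 2 := by rw [haL, hT]; ring
  set g0 : ℝ → ℝ := fun x => f x * max 0 (min 1 (R + 1 - |x|)) with hg0
  have hg0cont : Continuous g0 := by
    apply f.continuous.mul
    fun_prop
  have hcut0 : ∀ x : ℝ, R + 2 ≤ |x| → g0 x = 0 := by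
    intro x hx
    have : min 1 (R + 1 - |x|) ≤ -1 := le_trans (min_le_right _ _) (by linarith)
    rw [hg0]
    simp only []
    rw [max_eq_left (by linarith), mul_zero]
  have hg0ends : g0 aL = g0 (aL + T) := by
    rw [hcut0 aL (by rw [haL, abs_of_nonpos (by linarith)]; linarith),
        hcut0 (aL + T) (by rw [haLT, abs_of_nonneg (by linarith)])]
  have hg0bd : ∀ x : ℝ, |g0 x| ≤ ‖f‖ := by
    intro x
    rw [hg0]
    simp only []
    rw [abs_mul]
    have h1 : |f x| ≤ ‖f‖ := by
      have := f.norm_coe_le_norm x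
      rwa [Real.norm_eq_abs] at this
    have h2 : |max 0 (min 1 (R + 1 - |x|))| ≤ 1 := by
      rw [abs_of_nonneg (le_max_left _ _)]
      exact max_le (by norm_num) (le_trans (min_le_left _ _) le_rfl)
    calc |f x| * |max 0 (min 1 (R + 1 - |x|))| ≤ ‖f‖ * 1 := by
          apply mul_le_mul h1 h2 (abs_nonneg _) (norm_nonneg _)
      _ = ‖f‖ := mul_one _
  have hg0eq : ∀ x : ℝ, |x| ≤ R → g0 x = f x := by
    intro x hx
    rw [hg0]
    simp only []
    rw [min_eq_left (by linarith), max_eq_right (by norm_num), mul_one]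
  set G : C(AddCircle T, ℝ) :=
    ⟨AddCircle.liftIco T aL g0,
      AddCircle.liftIco_continuous (by rw [hg0ends]) hg0cont.continuousOn⟩ with hG
  have hGbd : ∀ z : AddCircle T, |G z| ≤ ‖f‖ := fun z => hg0bd _
  have hGx : ∀ x : ℝ, |x| ≤ R → G (x : AddCircle T) = f x := by
    intro x hx
    have hmem : x ∈ Set.Ico aL (aL + T) := by
      rw [haLT]
      constructor
      · rw [haL]; cases abs_le.mp hx; linarith
      · cases abs_le.mp hx; linarith
    show AddCircle.liftIco T aL g0 ↑x = f x
    rw [AddCircle.liftIco_coe_apply hmem]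
    exact hg0eq x hx
  set Gc : C(AddCircle T, ℂ) :=
    ContinuousMap.comp ⟨(fun r : ℝ => (r : ℂ)), Complex.continuous_ofReal⟩ G with hGc
  -- density of trigonometric polynomials
  have hdense : Gc ∈ closure ((Submodule.span ℂ (Set.range (@fourier T))) : Set C(AddCircle T, ℂ)) := by
    have h := span_fourier_closure_eq_top (T := T)
    have : Gc ∈ (Submodule.span ℂ (Set.range (@fourier T))).topologicalClosure := by
      rw [h]; trivial
    rwa [← Submodule.topologicalClosure_coe]
  obtain ⟨P, hPmem, hPdist⟩ := Metric.mem_closure_iff.mp hdense ε hε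
  obtain ⟨n, c, g, hPsum⟩ := Submodule.mem_span_set'.mp hPmem
  set k : Fin n → ℤ := fun i => (g i).2.choose with hk
  have hkg : ∀ i, fourier (k i) = (g i : C(AddCircle T, ℂ)) := fun i => (g i).2.choose_spec
  have hPx : ∀ x : ℝ, (P (x : AddCircle T)) =
      ∑ i, c i * Complex.exp (Complex.I * ((2 * Real.pi * (k i) / T : ℝ) : ℂ) * (x:ℂ)) := by
    intro x
    rw [← hPsum, ContinuousMap.coe_sum, Finset.sum_apply]
    apply Finset.sum_congr rfl
    intro i _
    rw [ContinuousMap.smul_apply, ← hkg i, fourier_coe_apply, smul_eq_mul]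
    congr 1
    push_cast
    have hTne : (T : ℂ) ≠ 0 := by
      simp only [Ne, Complex.ofReal_eq_zero]
      positivity
    field_simp
  have hdiff : ∀ x : ℝ, ‖Gc (x : AddCircle T) - P (x : AddCircle T)‖ ≤ ε := by
    intro x
    have h1 : dist (Gc (x : AddCircle T)) (P (x : AddCircle T)) ≤ dist Gc P :=
      ContinuousMap.dist_apply_le_dist _
    rw [Complex.dist_eq] at h1
    linarith [hPdist]
  have hGcre : ∀ x : ℝ, (Gc (x : AddCircle T)).re = G (x : AddCircle T) := by
    intro x
    rfl
  refine ⟨n, c, fun i => 2 * Real.pi * (k i) / T, ?_, ?_⟩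
  · intro x hx
    rw [← hPx x]
    have hfeq : (f x : ℝ) = (Gc (x : AddCircle T)).re := by rw [hGcre, hGx x hx]
    rw [hfeq]
    calc |(Gc (x : AddCircle T)).re - (P (x : AddCircle T)).re|
        = |(Gc (x : AddCircle T) - P (x : AddCircle T)).re| := by rw [Complex.sub_re]
      _ ≤ ‖Gc (x : AddCircle T) - P (x : AddCircle T)‖ := Complex.abs_re_le_norm _
      _ ≤ ε := hdiff x
  · intro x
    rw [← hPx x]
    have h2 : |(P (x : AddCircle T)).re - (Gc (x : AddCircle T)).re| ≤ ε := by
      calc |(P (x : AddCircle T)).re - (Gc (x : AddCircle T)).re|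
          = |(P (x : AddCircle T) - Gc (x : AddCircle T)).re| := by rw [Complex.sub_re]
        _ ≤ ‖P (x : AddCircle T) - Gc (x : AddCircle T)‖ := Complex.abs_re_le_norm _
        _ = ‖Gc (x : AddCircle T) - P (x : AddCircle T)‖ := norm_sub_rev _ _
        _ ≤ ε := hdiff x
    have h3 : |(Gc (x : AddCircle T)).re| ≤ ‖f‖ := by rw [hGcre]; exact hGbd _
    calc |(P (x : AddCircle T)).re|
        ≤ |(Gc (x : AddCircle T)).re| + |(P (x : AddCircle T)).re - (Gc (x : AddCircle T)).re| := by
          nlinarith [abs_sub_abs_le_abs_sub ((P (x : AddCircle T)).re) ((Gc (x : AddCircle T)).re), abs_nonneg ((P (x : AddCircle T)).re - (Gc (x : AddCircle T)).re)]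
      _ ≤ ‖f‖ + ε := add_le_add h3 h2

lemma split_bound (ν : Measure ℝ) [IsProbabilityMeasure ν] (g : ℝ → ℝ) (hg : Continuous g)
    (R C₁ C₂ : ℝ) (hC₁ : 0 ≤ C₁) (hC₂ : 0 ≤ C₂)
    (h1 : ∀ x : ℝ, |x| ≤ R → |g x| ≤ C₁) (h2 : ∀ x : ℝ, |g x| ≤ C₂) :
    |∫ x, g x ∂ν| ≤ C₁ + C₂ * (ν {x : ℝ | R < |x|}).toReal := by
  have hS : MeasurableSet {x : ℝ | R < |x|} :=
    measurableSet_lt measurable_const continuous_abs.measurable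
  have hgi : Integrable g ν := by
    apply Integrable.mono' (integrable_const C₂) hg.aestronglyMeasurable
    filter_upwards with x
    rw [Real.norm_eq_abs]; exact h2 x
  have hsplit : ∫ x in {x : ℝ | R < |x|}, g x ∂ν + ∫ x in {x : ℝ | R < |x|}ᶜ, g x ∂ν
      = ∫ x, g x ∂ν := integral_add_compl hS hgi
  have hb1 : |∫ x in {x : ℝ | R < |x|}ᶜ, g x ∂ν| ≤ C₁ := by
    have := norm_setIntegral_le_of_norm_le_const (μ := ν) (s := {x : ℝ | R < |x|}ᶜ)
      (f := g) (C := C₁) (measure_lt_top ν _) ?_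
    · rw [Real.norm_eq_abs] at this
      calc |∫ x in {x : ℝ | R < |x|}ᶜ, g x ∂ν| ≤ C₁ * (ν {x : ℝ | R < |x|}ᶜ).toReal := this
        _ ≤ C₁ * 1 := by
            apply mul_le_mul_of_nonneg_left _ hC₁
            have h4 : ν {x : ℝ | R < |x|}ᶜ ≤ 1 := prob_le_one
            exact ENNReal.toReal_le_of_le_ofReal one_pos.le (by simpa using h4)
        _ = C₁ := mul_one _
    · intro x hx
      rw [Real.norm_eq_abs]
      exact h1 x (le_of_not_gt hx)
  have hb2 : |∫ x in {x : ℝ | R < |x|}, g x ∂ν| ≤ C₂ * (ν {x : ℝ | R < |x|}).toReal := by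
    have := norm_setIntegral_le_of_norm_le_const (μ := ν) (s := {x : ℝ | R < |x|})
      (f := g) (C := C₂) (measure_lt_top ν _) ?_
    · rwa [Real.norm_eq_abs] at this
    · intro x _
      rw [Real.norm_eq_abs]; exact h2 x
  calc |∫ x, g x ∂ν| = |∫ x in {x : ℝ | R < |x|}, g x ∂ν + ∫ x in {x : ℝ | R < |x|}ᶜ, g x ∂ν| := by
        rw [hsplit]
    _ ≤ |∫ x in {x : ℝ | R < |x|}, g x ∂ν| + |∫ x in {x : ℝ | R < |x|}ᶜ, g x ∂ν| := abs_add_le _ _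
    _ ≤ C₂ * (ν {x : ℝ | R < |x|}).toReal + C₁ := add_le_add hb2 hb1
    _ = C₁ + C₂ * (ν {x : ℝ | R < |x|}).toReal := by ring

theorem phiFn_continuous_in_Delta
    (α h : ℝ) (hα : α ∈ Set.Ioo (0 : ℝ) 2) (hh : 0 < h) (u : ℝ)
    -- `F` is the well-defined map `Δ ↦ φ_{α,Δ}(u)` (the value does not depend on the
    -- admissible choice of `τ`)
    (F : ℝ → ℂ)
    (hF : ∀ Δ ∈ Set.Icc (0 : ℝ) h, ∀ τ : ℝ, 0 < τ →
      (∀ m : ℤ, τ ≠ Real.exp (h * (m : ℝ) - Δ)) → F Δ = phiFn α h Δ τ u) :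
    ContinuousOn F (Set.Icc 0 h) ∧
    -- consequently, any family of probability measures `F_{α,Δ}` with characteristic
    -- functions `φ_{α,Δ}` depends continuously on `Δ ∈ [0,h]` in the weak topology
    (∀ μ : ℝ → Measure ℝ, (∀ Δ ∈ Set.Icc (0 : ℝ) h, IsProbabilityMeasure (μ Δ)) →
      (∀ Δ ∈ Set.Icc (0 : ℝ) h, ∀ τ : ℝ, 0 < τ →
        (∀ m : ℤ, τ ≠ Real.exp (h * (m : ℝ) - Δ)) →
        ∀ v : ℝ, (∫ x, Complex.exp (Complex.I * (v : ℂ) * (x : ℂ)) ∂(μ Δ)) = phiFn α h Δ τ v) →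
      ∀ f : BoundedContinuousFunction ℝ ℝ,
        ContinuousOn (fun Δ => ∫ x, f x ∂(μ Δ)) (Set.Icc 0 h)) := by
  constructor
  · -- Part 1
    apply ContinuousOn.congr (Gfun_continuous α h u hα hh).continuousOn
    intro Δ hΔ
    rw [hF Δ hΔ (Real.exp (h/2 - Δ)) (Real.exp_pos _) (fun m => tau_admissible h Δ hh m),
      phi_eq α h hh u Δ hΔ]
  · -- Part 2
    intro μ hprob hchar f
    -- the characteristic function as a nice function of Δ
    have hφG : ∀ v : ℝ, ∀ Δ ∈ Set.Icc (0:ℝ) h,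
        (∫ x, Complex.exp (Complex.I * (v : ℂ) * (x : ℂ)) ∂(μ Δ)) = Gfun α h v Δ := by
      intro v Δ hΔ
      rw [hchar Δ hΔ (Real.exp (h/2 - Δ)) (Real.exp_pos _)
        (fun m => tau_admissible h Δ hh m) v, phi_eq α h hh v Δ hΔ]
    intro Δ0 hΔ0
    haveI inst0 : IsProbabilityMeasure (μ Δ0) := hprob Δ0 hΔ0
    have hφcw : ∀ v : ℝ, ContinuousWithinAt
        (fun Δ => ∫ x, Complex.exp (Complex.I * (v : ℂ) * (x : ℂ)) ∂(μ Δ))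
        (Set.Icc 0 h) Δ0 := by
      intro v
      exact ((Gfun_continuous α h v hα hh).continuousAt.continuousWithinAt).congr
        (fun Δ hΔ => hφG v Δ hΔ) (hφG v Δ0 hΔ0)
    rw [ContinuousWithinAt]
    rw [Metric.tendsto_nhds]
    intro ε hε
    set M : ℝ := ‖f‖ + 1 with hM
    have hM0 : 0 < M := by positivity
    have hfb : ∀ x : ℝ, |f x| ≤ M := by
      intro x
      have := f.norm_coe_le_norm x
      rw [Real.norm_eq_abs] at this
      linarith
    set e1 : ℝ := min (ε/8) 1 with he1def
    have he1 : 0 < e1 := lt_min (by linarith) one_pos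
    set t : ℝ := ε / (8 * (2*M + 1)) with htdef
    have ht : 0 < t := by positivity
    -- Step 1 : choose a cutoff frequency `a` with small `K Δ0`
    obtain ⟨δ, hδ, hball⟩ := Metric.continuousAt_iff.mp
      ((charFn_continuous (μ Δ0)).continuousAt (x := 0)) (t/8) (by positivity)
    set a : ℝ := δ/2 with hadef
    have ha : 0 < a := by positivity
    have hchar0 : (∫ x, Complex.exp (Complex.I * ((0:ℝ) : ℂ) * (x : ℂ)) ∂(μ Δ0)) = 1 := by
      simp
    have hsmall : ∀ v ∈ Set.Ioc (-a) a,
        |1 - (∫ x, Complex.exp (Complex.I * (v : ℂ) * (x : ℂ)) ∂(μ Δ0)).re| ≤ t/8 := by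
      intro v hv
      have hd : dist v (0:ℝ) < δ := by
        rw [Real.dist_eq, sub_zero, abs_lt]
        rcases hv with ⟨h1, h2⟩
        constructor <;> [linarith; linarith]
      have := hball hd
      rw [hchar0, dist_eq_norm] at this
      have h5 : |1 - (∫ x, Complex.exp (Complex.I * (v : ℂ) * (x : ℂ)) ∂(μ Δ0)).re|
          = |((1:ℂ) - ∫ x, Complex.exp (Complex.I * (v : ℂ) * (x : ℂ)) ∂(μ Δ0)).re| := by
        rw [Complex.sub_re, Complex.one_re]
      rw [h5]
      calc |((1:ℂ) - ∫ x, Complex.exp (Complex.I * (v : ℂ) * (x : ℂ)) ∂(μ Δ0)).re|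
          ≤ ‖(1:ℂ) - ∫ x, Complex.exp (Complex.I * (v : ℂ) * (x : ℂ)) ∂(μ Δ0)‖ :=
            Complex.abs_re_le_norm _
        _ = ‖(∫ x, Complex.exp (Complex.I * (v : ℂ) * (x : ℂ)) ∂(μ Δ0)) - 1‖ := by
            rw [norm_sub_rev]
        _ ≤ t/8 := this.le
    -- the K functional
    set K : ℝ → ℝ := fun Δ => ∫ v in Set.Ioc (-a) a,
      (1 - (∫ x, Complex.exp (Complex.I * (v : ℂ) * (x : ℂ)) ∂(μ Δ)).re) with hKdef
    have hIocFin : volume (Set.Ioc (-a) a) < ⊤ := by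
      rw [Real.volume_Ioc]; exact ENNReal.ofReal_lt_top
    have hIocVol : (volume (Set.Ioc (-a) a)).toReal = 2*a := by
      rw [Real.volume_Ioc, ENNReal.toReal_ofReal (by linarith)]; ring
    have hK0 : K Δ0 ≤ a * t / 4 := by
      have hb := norm_setIntegral_le_of_norm_le_const (μ := volume) (s := Set.Ioc (-a) a)
        (f := fun v : ℝ => (1 - (∫ x, Complex.exp (Complex.I * (v : ℂ) * (x : ℂ)) ∂(μ Δ0)).re))
        (C := t/8) hIocFin
        (fun v hv => by rw [Real.norm_eq_abs]; exact hsmall v hv)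
      rw [Real.norm_eq_abs] at hb
      calc K Δ0 ≤ |K Δ0| := le_abs_self _
        _ ≤ t/8 * (volume (Set.Ioc (-a) a)).toReal := hb
        _ = t/8 * (2*a) := by rw [hIocVol]
        _ = a * t / 4 := by ring
    have hKcw : ContinuousWithinAt K (Set.Icc 0 h) Δ0 := by
      apply continuousWithinAt_of_dominated (bound := fun _ => (2:ℝ))
      · filter_upwards [self_mem_nhdsWithin] with Δ hΔ
        haveI := hprob Δ hΔ
        exact (continuous_const.sub
          (Complex.continuous_re.comp (charFn_continuous (μ Δ)))).aestronglyMeasurable.restrict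
      · filter_upwards [self_mem_nhdsWithin] with Δ hΔ
        haveI := hprob Δ hΔ
        filter_upwards with v
        rw [Real.norm_eq_abs]
        have h6 : ‖∫ x, Complex.exp (Complex.I * (v : ℂ) * (x : ℂ)) ∂(μ Δ)‖ ≤ 1 :=
          charFn_norm_le_one (μ Δ) v
        have h7 : |(∫ x, Complex.exp (Complex.I * (v : ℂ) * (x : ℂ)) ∂(μ Δ)).re| ≤ 1 :=
          le_trans (Complex.abs_re_le_norm _) h6
        rw [abs_le] at h7 ⊢
        constructor <;> [linarith [h7.2]; linarith [h7.1]]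
      · haveI : IsFiniteMeasure (volume.restrict (Set.Ioc (-a) a)) := by
          constructor
          rwa [Measure.restrict_apply_univ]
        exact integrable_const 2
      · filter_upwards with v
        exact continuousWithinAt_const.sub
          (Complex.continuous_re.continuousAt.comp_continuousWithinAt (hφcw v))
    have hKev : ∀ᶠ Δ in nhdsWithin Δ0 (Set.Icc 0 h), K Δ < a * t := by
      have hlt : K Δ0 < a * t := lt_of_le_of_lt hK0 (by nlinarith)
      exact hKcw.eventually_lt continuousWithinAt_const hlt
    -- uniform tail bound
    set R : ℝ := 2/a with hRdef
    have hR : 0 < R := by positivity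
    have htail : ∀ Δ ∈ Set.Icc (0:ℝ) h, K Δ < a * t →
        ((μ Δ) {x : ℝ | R < |x|}).toReal ≤ t := by
      intro Δ hΔ hKΔ
      haveI := hprob Δ hΔ
      have h8 : a * ((μ Δ) {x : ℝ | 2/a < |x|}).toReal ≤ K Δ := truncation (μ Δ) a ha
      rw [hRdef]
      nlinarith [h8, hKΔ]
    have htail0 : ((μ Δ0) {x : ℝ | R < |x|}).toReal ≤ t :=
      htail Δ0 hΔ0 (lt_of_le_of_lt hK0 (by nlinarith))
    -- Step 2 : trigonometric approximation
    obtain ⟨n, c, w, happrox, hbd⟩ := trig_approx f R e1 hR he1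
    set Pre : ℝ → ℝ := fun x =>
      (∑ i, c i * Complex.exp (Complex.I * (w i : ℂ) * (x:ℂ))).re with hPre
    have hPreCont : Continuous Pre := by
      apply Complex.continuous_re.comp
      apply continuous_finset_sum
      intro i _
      apply continuous_const.mul
      fun_prop
    have hPrebd : ∀ x : ℝ, |Pre x| ≤ M := by
      intro x
      calc |Pre x| ≤ ‖f‖ + e1 := hbd x
        _ ≤ ‖f‖ + 1 := by linarith [min_le_right (ε/8) (1:ℝ)]
        _ = M := hM.symm
    -- the integral of the trigonometric polynomial, expressed via `Gfun`
    have hIPeq : ∀ Δ ∈ Set.Icc (0:ℝ) h,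
        ∫ x, Pre x ∂(μ Δ) = (∑ i, c i * Gfun α h (w i) Δ).re := by
      intro Δ hΔ
      haveI := hprob Δ hΔ
      have hint : ∀ i : Fin n, Integrable
          (fun x : ℝ => c i * Complex.exp (Complex.I * (w i : ℂ) * (x:ℂ))) (μ Δ) :=
        fun i => (charFn_integrable (μ Δ) (w i)).const_mul (c i)
      have hsumint : Integrable
          (fun x : ℝ => ∑ i, c i * Complex.exp (Complex.I * (w i : ℂ) * (x:ℂ))) (μ Δ) :=
        integrable_finset_sum _ (fun i _ => hint i)
      have h9 : ∫ x, Pre x ∂(μ Δ)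
          = (∫ x, (∑ i, c i * Complex.exp (Complex.I * (w i : ℂ) * (x:ℂ))) ∂(μ Δ)).re := by
        rw [← Complex.reCLM_apply, ← ContinuousLinearMap.integral_comp_comm _ hsumint]
        rfl
      rw [h9, integral_finset_sum _ (fun i _ => hint i)]
      congr 1
      apply Finset.sum_congr rfl
      intro i _
      rw [integral_const_mul, hφG (w i) Δ hΔ]
    have hIPcw : ContinuousWithinAt (fun Δ => ∫ x, Pre x ∂(μ Δ)) (Set.Icc 0 h) Δ0 := by
      have hc : Continuous (fun Δ => (∑ i, c i * Gfun α h (w i) Δ).re) := by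
        apply Complex.continuous_re.comp
        apply continuous_finset_sum
        intro i _
        exact continuous_const.mul (Gfun_continuous α h (w i) hα hh)
      exact (hc.continuousAt.continuousWithinAt).congr
        (fun Δ hΔ => hIPeq Δ hΔ) (hIPeq Δ0 hΔ0)
    have hIPev : ∀ᶠ Δ in nhdsWithin Δ0 (Set.Icc 0 h),
        dist (∫ x, Pre x ∂(μ Δ)) (∫ x, Pre x ∂(μ Δ0)) < ε/4 :=
      Metric.tendsto_nhds.mp hIPcw (ε/4) (by positivity)
    -- key estimate
    have hkey : ∀ Δ ∈ Set.Icc (0:ℝ) h, ((μ Δ) {x : ℝ | R < |x|}).toReal ≤ t →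
        |(∫ x, f x ∂(μ Δ)) - ∫ x, Pre x ∂(μ Δ)| ≤ ε/4 := by
      intro Δ hΔ htailΔ
      haveI := hprob Δ hΔ
      have hdiff : (∫ x, f x ∂(μ Δ)) - ∫ x, Pre x ∂(μ Δ)
          = ∫ x, (f x - Pre x) ∂(μ Δ) := by
        rw [integral_sub (f.integrable (μ Δ))]
        apply Integrable.mono' (integrable_const M) hPreCont.aestronglyMeasurable
        filter_upwards with x
        rw [Real.norm_eq_abs]; exact hPrebd x
      rw [hdiff]
      have hsb := split_bound (μ Δ) (fun x => f x - Pre x) (f.continuous.sub hPreCont)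
        R e1 (2*M) he1.le (by linarith)
        (fun x hx => by
          have := happrox x hx
          calc |f x - Pre x| ≤ e1 := this)
        (fun x => by
          calc |f x - Pre x| ≤ |f x| + |Pre x| := abs_sub _ _
            _ ≤ M + M := add_le_add (hfb x) (hPrebd x)
            _ = 2*M := by ring)
      calc |∫ x, (f x - Pre x) ∂(μ Δ)| ≤ e1 + 2*M * ((μ Δ) {x : ℝ | R < |x|}).toReal := hsb
        _ ≤ ε/8 + 2*M * t := by
            apply add_le_add (min_le_left _ _)
            apply mul_le_mul_of_nonneg_left htailΔ (by linarith)
        _ ≤ ε/8 + ε/8 := by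
            apply add_le_add le_rfl
            rw [htdef, ← mul_div_assoc]
            rw [div_le_div_iff₀ (by positivity) (by norm_num : (0:ℝ) < 8)]
            nlinarith
        _ = ε/4 := by ring
    -- assemble
    filter_upwards [hKev, hIPev, self_mem_nhdsWithin] with Δ hKΔ hIPΔ hmem
    have htailΔ := htail Δ hmem hKΔ
    have h1 := hkey Δ hmem htailΔ
    have h2 := hkey Δ0 hΔ0 htail0
    rw [Real.dist_eq] at hIPΔ ⊢
    calc |(∫ x, f x ∂(μ Δ)) - ∫ x, f x ∂(μ Δ0)|
        ≤ |(∫ x, f x ∂(μ Δ)) - ∫ x, Pre x ∂(μ Δ)|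
          + |(∫ x, Pre x ∂(μ Δ)) - ∫ x, Pre x ∂(μ Δ0)|
          + |(∫ x, Pre x ∂(μ Δ0)) - ∫ x, f x ∂(μ Δ0)| := by
          have := abs_sub_le ((∫ x, f x ∂(μ Δ))) (∫ x, Pre x ∂(μ Δ0)) (∫ x, f x ∂(μ Δ0))
          have h11 := abs_sub_le ((∫ x, f x ∂(μ Δ))) (∫ x, Pre x ∂(μ Δ)) (∫ x, Pre x ∂(μ Δ0))
          linarith
      _ < ε := by
          rw [abs_sub_comm] at h2
          linarith
end

section
/- For every α ∈ (0,2), h > 0 and Δ ∈ [0,h], the function φ_{α,Δ} is semi-stable with index α and span e^h: there exists c ∈ ℝ such that for all u ∈ ℝ, (φ_{α,Δ}(u))^{e^{αh}} = e^{icu} · φ_{α,Δ}(e^{h} u). -/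
open MeasureTheory Filter

/-- The individual summand of `phiExp`. -/
noncomputable def phiTerm (α h Δ τ u : ℝ) (m : ℤ) : ℂ :=
  (Complex.exp (Complex.I * (u : ℂ) * (Real.exp (h * (m : ℝ) - Δ) : ℂ)) - 1 -
      Complex.I * (u : ℂ) * (Real.exp (h * (m : ℝ) - Δ) : ℂ) *
        (if Real.exp (h * (m : ℝ) - Δ) < τ then 1 else 0)) *
      (Real.exp (-α * (h * (m : ℝ) - Δ)) : ℂ)

lemma phiExp_eq (α h Δ τ u : ℝ) :
    phiExp α h Δ τ u =
      Complex.I * (Cconst α h Δ τ : ℂ) * (u : ℂ) + ∑' m : ℤ, phiTerm α h Δ τ u m := rfl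

/-- A global quadratic bound: `‖e^{ix} - 1 - ix‖ ≤ 3 x²` for all real `x`. -/
lemma norm_exp_I_sub_one_sub_le (x : ℝ) :
    ‖Complex.exp (Complex.I * x) - 1 - Complex.I * x‖ ≤ 3 * x ^ 2 := by
  have habsIx : ‖Complex.I * x‖ = |x| := by
    rw [norm_mul, Complex.norm_I, one_mul, Complex.norm_real, Real.norm_eq_abs]
  rcases le_or_gt (|x|) 1 with hx | hx
  · have h1 : ‖Complex.I * x‖ ≤ 1 := by rw [habsIx]; exact hx
    calc ‖Complex.exp (Complex.I * x) - 1 - Complex.I * x‖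
        ≤ ‖Complex.I * x‖ ^ 2 := Complex.norm_exp_sub_one_sub_id_le h1
      _ = |x| ^ 2 := by rw [habsIx]
      _ = x ^ 2 := sq_abs x
      _ ≤ 3 * x ^ 2 := by nlinarith [sq_nonneg x]
  · have h1 : 1 ≤ x ^ 2 := by nlinarith [sq_abs x]
    have h2 : |x| ≤ x ^ 2 := by nlinarith [sq_abs x, abs_nonneg x]
    have hxe : ‖Complex.exp (Complex.I * x)‖ = 1 := by
      rw [mul_comm]
      exact Complex.norm_exp_ofReal_mul_I x
    calc ‖Complex.exp (Complex.I * x) - 1 - Complex.I * x‖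
        ≤ ‖Complex.exp (Complex.I * x) - 1‖ + ‖Complex.I * x‖ := by
          simpa [sub_eq_add_neg] using
            norm_add_le (Complex.exp (Complex.I * x) - 1) (-(Complex.I * x))
      _ ≤ (‖Complex.exp (Complex.I * x)‖ + 1) + |x| := by
          gcongr
          · simpa [sub_eq_add_neg] using
              norm_add_le (Complex.exp (Complex.I * x)) (-1)
          · rw [habsIx]
      _ = 2 + |x| := by rw [hxe]; norm_num
      _ ≤ 3 * x ^ 2 := by nlinarith

/-- Geometric summability on the left half-lattice `{m ≤ n₀}`. -/
lemma summable_exp_restrict_le (β h Δ A : ℝ) (hh : 0 < h) (hβ : 0 < β) (n₀ : ℤ) :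
    Summable (fun m : ℤ => if m ≤ n₀ then A * Real.exp (β * (h * (m : ℝ) - Δ)) else 0) := by
  have hinj : Function.Injective (fun n : ℕ => n₀ - (n : ℤ)) := by
    intro a b hab; simpa using hab
  rw [← Function.Injective.summable_iff hinj (by
    intro m hm
    rw [if_neg]
    intro hc
    exact hm ⟨(n₀ - m).toNat, by show n₀ - ((n₀ - m).toNat : ℤ) = m; omega⟩)]
  apply Summable.of_norm_bounded (g := fun n : ℕ => |A| * Real.exp (β * (h * (n₀ : ℝ) - Δ)) * Real.exp (-(β * h)) ^ n)
  · exact Summable.mul_left _ (summable_geometric_of_lt_one (Real.exp_pos _).le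
      (Real.exp_lt_one_iff.2 (by nlinarith)))
  · intro n
    show ‖if (n₀ - (n : ℤ)) ≤ n₀ then
        A * Real.exp (β * (h * ((n₀ - (n : ℤ) : ℤ) : ℝ) - Δ)) else 0‖ ≤ _
    rw [if_pos (by omega), Real.norm_eq_abs, abs_mul, Real.abs_exp]
    apply le_of_eq
    rw [mul_assoc, ← Real.exp_nat_mul, ← Real.exp_add]
    congr 1
    push_cast
    ring

/-- Geometric summability on the right half-lattice `{m > n₀}`. -/
lemma summable_exp_restrict_gt (β h Δ A : ℝ) (hh : 0 < h) (hβ : β < 0) (n₀ : ℤ) :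
    Summable (fun m : ℤ => if n₀ < m then A * Real.exp (β * (h * (m : ℝ) - Δ)) else 0) := by
  have hinj : Function.Injective (fun n : ℕ => n₀ + 1 + (n : ℤ)) := by
    intro a b hab; simpa using hab
  rw [← Function.Injective.summable_iff hinj (by
    intro m hm
    rw [if_neg]
    intro hc
    exact hm ⟨(m - (n₀ + 1)).toNat, by show n₀ + 1 + ((m - (n₀ + 1)).toNat : ℤ) = m; omega⟩)]
  apply Summable.of_norm_bounded (g := fun n : ℕ => |A| * Real.exp (β * (h * ((n₀ : ℝ) + 1) - Δ)) * Real.exp (β * h) ^ n)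
  · exact Summable.mul_left _ (summable_geometric_of_lt_one (Real.exp_pos _).le
      (Real.exp_lt_one_iff.2 (by nlinarith)))
  · intro n
    show ‖if n₀ < (n₀ + 1 + (n : ℤ)) then
        A * Real.exp (β * (h * ((n₀ + 1 + (n : ℤ) : ℤ) : ℝ) - Δ)) else 0‖ ≤ _
    rw [if_pos (by omega), Real.norm_eq_abs, abs_mul, Real.abs_exp]
    apply le_of_eq
    rw [mul_assoc, ← Real.exp_nat_mul, ← Real.exp_add]
    congr 1
    push_cast
    ring

/-- Characterization of the truncation indicator on the lattice. -/
lemma ind_iff (h Δ τ : ℝ) (hh : 0 < h) (hτ : 0 < τ)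
    (hτlat : ∀ m : ℤ, τ ≠ Real.exp (h * (m : ℝ) - Δ)) (m : ℤ) :
    Real.exp (h * (m : ℝ) - Δ) < τ ↔ m ≤ ⌊(Real.log τ + Δ) / h⌋ := by
  rw [← Real.lt_log_iff_exp_lt hτ]
  constructor
  · intro H
    apply Int.le_floor.2
    rw [le_div_iff₀ hh]
    nlinarith [mul_comm (m : ℝ) h]
  · intro H
    have h1 : (m : ℝ) ≤ (Real.log τ + Δ) / h :=
      le_trans (by exact_mod_cast H) (Int.floor_le _)
    have h2 : h * (m : ℝ) ≤ Real.log τ + Δ := by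
      nlinarith [(le_div_iff₀ hh).1 h1]
    rcases lt_or_eq_of_le h2 with h3 | h3
    · linarith
    · exact absurd (by rw [← Real.exp_log hτ]; congr 1; linarith : τ = Real.exp (h * (m:ℝ) - Δ))
        (hτlat m)

/-- Summability of the series defining `phiExp`. -/
lemma phiTerm_summable (α h Δ τ u : ℝ) (hα : α ∈ Set.Ioo (0 : ℝ) 2) (hh : 0 < h)
    (hτ : 0 < τ) (hτlat : ∀ m : ℤ, τ ≠ Real.exp (h * (m : ℝ) - Δ)) :
    Summable (phiTerm α h Δ τ u) := by
  obtain ⟨hα0, hα2⟩ := hα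
  set n₀ : ℤ := ⌊(Real.log τ + Δ) / h⌋ with hn₀
  apply Summable.of_norm_bounded (g := fun m : ℤ => (if m ≤ n₀ then 3 * u ^ 2 * Real.exp ((2 - α) * (h * (m : ℝ) - Δ)) else 0) +
      (if n₀ < m then 2 * Real.exp (-α * (h * (m : ℝ) - Δ)) else 0))
  · exact (summable_exp_restrict_le (2 - α) h Δ (3 * u ^ 2) hh (by linarith) n₀).add
      (summable_exp_restrict_gt (-α) h Δ 2 hh (by linarith) n₀)
  · intro m
    set y : ℝ := h * (m : ℝ) - Δ with hy
    have hnorm : ∀ z : ℂ, ‖z * (Real.exp (-α * y) : ℂ)‖ = ‖z‖ * Real.exp (-α * y) := by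
      intro z
      rw [norm_mul, Complex.norm_real, Real.norm_eq_abs, Real.abs_exp]
    rw [phiTerm]
    by_cases hm : m ≤ n₀
    · rw [if_pos ((ind_iff h Δ τ hh hτ hτlat m).2 hm), if_pos hm, if_neg (by omega), add_zero]
      rw [hnorm]
      have key : ‖Complex.exp (Complex.I * (u : ℂ) * (Real.exp y : ℂ)) - 1 -
          Complex.I * (u : ℂ) * (Real.exp y : ℂ) * 1‖ ≤ 3 * (u * Real.exp y) ^ 2 := by
        rw [mul_one,
          show Complex.I * (u : ℂ) * (Real.exp y : ℂ) = Complex.I * ((u * Real.exp y : ℝ) : ℂ)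
            by push_cast; ring]
        exact norm_exp_I_sub_one_sub_le (u * Real.exp y)
      calc ‖Complex.exp (Complex.I * (u : ℂ) * (Real.exp y : ℂ)) - 1 -
            Complex.I * (u : ℂ) * (Real.exp y : ℂ) * 1‖ * Real.exp (-α * y)
          ≤ 3 * (u * Real.exp y) ^ 2 * Real.exp (-α * y) := by gcongr
        _ = 3 * u ^ 2 * Real.exp ((2 - α) * y) := by
            rw [mul_pow, show Real.exp y ^ 2 = Real.exp (2 * y) by
                rw [← Real.exp_nat_mul]; norm_num]
            rw [show 3 * (u ^ 2 * Real.exp (2 * y)) * Real.exp (-α * y) =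
                3 * u ^ 2 * (Real.exp (2 * y) * Real.exp (-α * y)) by ring, ← Real.exp_add]
            ring_nf
    · rw [if_neg (fun hc => hm ((ind_iff h Δ τ hh hτ hτlat m).1 hc)), if_neg hm,
        if_pos (by omega), zero_add]
      rw [mul_zero, sub_zero, hnorm]
      gcongr
      calc ‖Complex.exp (Complex.I * (u : ℂ) * (Real.exp y : ℂ)) - 1‖
          ≤ ‖Complex.exp (Complex.I * (u : ℂ) * (Real.exp y : ℂ))‖ + 1 := by
            simpa [sub_eq_add_neg] using
              norm_add_le (Complex.exp (Complex.I * (u : ℂ) * (Real.exp y : ℂ))) (-1)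
        _ = 2 := by
            rw [show Complex.I * (u : ℂ) * (Real.exp y : ℂ) =
                ((u * Real.exp y : ℝ) : ℂ) * Complex.I by push_cast; ring,
              Complex.norm_exp_ofReal_mul_I]
            norm_num

theorem phiFn_semistable
    (α h Δ τ : ℝ) (hα : α ∈ Set.Ioo (0 : ℝ) 2) (hh : 0 < h) (hΔ : Δ ∈ Set.Icc 0 h)
    (hτ : 0 < τ) (hτlat : ∀ m : ℤ, τ ≠ Real.exp (h * (m : ℝ) - Δ)) :
    -- `(φ_{α,Δ}(u))^{e^{αh}} = e^{icu} φ_{α,Δ}(e^h u)`, the power taken with the branch of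
    -- the logarithm given by the explicit Lévy–Khintchine exponent
    ∃ c : ℝ, ∀ u : ℝ,
      Complex.exp ((Real.exp (α * h) : ℂ) * phiExp α h Δ τ u) =
        Complex.exp (Complex.I * (c : ℂ) * (u : ℂ)) * phiFn α h Δ τ (Real.exp h * u) := by
  set n₀ : ℤ := ⌊(Real.log τ + Δ) / h⌋ with hn₀
  set κ : ℝ := Real.exp ((1 - α) * (h * (n₀ : ℝ) - Δ)) with hκ
  set C : ℝ := Cconst α h Δ τ with hC
  refine ⟨(Real.exp (α * h) - Real.exp h) * C + Real.exp h * κ, fun u => ?_⟩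
  set c : ℝ := (Real.exp (α * h) - Real.exp h) * C + Real.exp h * κ with hc
  set v : ℝ := Real.exp h * u with hv
  -- key shift identity for individual terms
  have hshift : ∀ m : ℤ, (Real.exp (α * h) : ℂ) * phiTerm α h Δ τ u m =
      phiTerm α h Δ τ v (m - 1) +
        (if m - 1 = n₀ then Complex.I * (v : ℂ) * (κ : ℂ) else 0) := by
    intro m
    have e1r : u * Real.exp (h * (m : ℝ) - Δ) =
        v * Real.exp (h * ((m - 1 : ℤ) : ℝ) - Δ) := by
      have hcomb : Real.exp (h * ((m : ℝ) - 1) - Δ) * Real.exp h = Real.exp (h * (m : ℝ) - Δ) := by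
        rw [← Real.exp_add]
        congr 1
        ring
      rw [hv]
      push_cast
      rw [← hcomb]
      ring
    have e1 : (u : ℂ) * (Real.exp (h * (m : ℝ) - Δ) : ℂ) =
        (v : ℂ) * (Real.exp (h * ((m - 1 : ℤ) : ℝ) - Δ) : ℂ) := by
      exact_mod_cast e1r
    have e2' : (Real.exp (α * h) : ℂ) * (Real.exp (-α * (h * (m : ℝ) - Δ)) : ℂ) =
        (Real.exp (-α * (h * ((m - 1 : ℤ) : ℝ) - Δ)) : ℂ) := by
      rw [← Complex.ofReal_mul, ← Real.exp_add]
      congr 2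
      push_cast
      ring
    rw [phiTerm, phiTerm]
    simp only [ind_iff h Δ τ hh hτ hτlat, ← hn₀]
    rw [show Complex.I * (u : ℂ) * (Real.exp (h * (m : ℝ) - Δ) : ℂ) =
        Complex.I * ((u : ℂ) * (Real.exp (h * (m : ℝ) - Δ) : ℂ)) by ring, e1]
    rw [show Complex.I * ((v:ℂ) * (Real.exp (h * ((m - 1 : ℤ) : ℝ) - Δ) : ℂ)) =
        Complex.I * (v:ℂ) * (Real.exp (h * ((m - 1 : ℤ) : ℝ) - Δ) : ℂ) by ring]
    by_cases hm : m - 1 = n₀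
    · have hm1 : m - 1 ≤ n₀ := le_of_eq hm
      have hm2 : ¬ (m ≤ n₀) := by omega
      rw [if_pos hm, if_pos hm1, if_neg hm2]
      have hκc : (κ : ℂ) = (Real.exp (h * ((m - 1 : ℤ) : ℝ) - Δ) : ℂ) *
          (Real.exp (-α * (h * ((m - 1 : ℤ) : ℝ) - Δ)) : ℂ) := by
        rw [← Complex.ofReal_mul, ← Real.exp_add, hκ]
        have hcast : (((m - 1 : ℤ) : ℝ)) = (n₀ : ℝ) := by exact_mod_cast hm
        rw [hcast]
        congr 1
        ring
      rw [hκc, ← e2']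
      ring
    · have hiff : (m - 1 ≤ n₀) ↔ (m ≤ n₀) := by omega
      rw [if_neg hm]
      by_cases hm1 : m ≤ n₀
      · rw [if_pos hm1, if_pos (hiff.2 hm1), ← e2']
        ring
      · rw [if_neg hm1, if_neg (fun hcon => hm1 (hiff.1 hcon)), ← e2']
        ring
  -- summabilities
  have hsumv : Summable (phiTerm α h Δ τ v) := phiTerm_summable α h Δ τ v hα hh hτ hτlat
  have hsumd : Summable (fun n : ℤ => if n = n₀ then Complex.I * (v : ℂ) * (κ : ℂ) else 0) := by
    apply summable_of_ne_finset_zero (s := {n₀})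
    intro n hn
    rw [if_neg (by simpa using hn)]
  -- the main identity on exponents
  have key : (Real.exp (α * h) : ℂ) * phiExp α h Δ τ u =
      Complex.I * (c : ℂ) * (u : ℂ) + phiExp α h Δ τ v := by
    rw [phiExp_eq, phiExp_eq, mul_add, ← tsum_mul_left]
    have t2 : ∑' m : ℤ, (Real.exp (α * h) : ℂ) * phiTerm α h Δ τ u m =
        ∑' m : ℤ, (phiTerm α h Δ τ v (m - 1) +
          (if m - 1 = n₀ then Complex.I * (v : ℂ) * (κ : ℂ) else 0)) := tsum_congr hshift
    rw [t2]
    have t3 : ∑' m : ℤ, (phiTerm α h Δ τ v (m - 1) +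
          (if m - 1 = n₀ then Complex.I * (v : ℂ) * (κ : ℂ) else 0)) =
        ∑' n : ℤ, (phiTerm α h Δ τ v n +
          (if n = n₀ then Complex.I * (v : ℂ) * (κ : ℂ) else 0)) :=
      (Equiv.subRight (1 : ℤ)).tsum_eq
        (fun n => phiTerm α h Δ τ v n + (if n = n₀ then Complex.I * (v : ℂ) * (κ : ℂ) else 0))
    rw [t3, Summable.tsum_add hsumv hsumd, tsum_ite_eq]
    have hvc : (v : ℂ) = (Real.exp h : ℂ) * (u : ℂ) := by rw [hv]; push_cast; ring
    rw [hvc, hc]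
    push_cast
    ring
  rw [key, Complex.exp_add, phiFn]
end

section
/- For h > 0, α ∈ (0,2), Δ ∈ ℝ, τ > 0 and every u ∈ ℝ, the series Σ_{m∈ℤ} (e^{i u e^{hm−Δ}} − 1 − i u e^{hm−Δ} 1_{e^{hm−Δ}<τ}) e^{−α(hm−Δ)} converges absolutely. -/
open MeasureTheory Filter

lemma aux_summable_exp_neg_abs (c h Δ : ℝ) (hc : 0 < c) (hh : 0 < h) :
    Summable (fun m : ℤ => Real.exp (-c * |h * (m : ℝ) - Δ|)) := by
  have hr : Real.exp (-(c * h)) < 1 := by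
    rw [Real.exp_lt_one_iff]; nlinarith
  have hgeo : Summable (fun n : ℕ => Real.exp (c * |Δ|) * Real.exp (-(c * h)) ^ n) :=
    (summable_geometric_of_lt_one (Real.exp_pos _).le hr).mul_left _
  have key : ∀ t : ℝ, h * t - |Δ| ≤ |h * t - Δ| ∧ h * t - |Δ| ≤ |h * t + Δ| := by
    intro t
    constructor
    · calc h * t - |Δ| ≤ h * t - Δ := by linarith [le_abs_self Δ]
        _ ≤ |h * t - Δ| := le_abs_self _
    · calc h * t - |Δ| ≤ h * t + Δ := by linarith [neg_abs_le Δ]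
        _ ≤ |h * t + Δ| := le_abs_self _
  apply Summable.of_nat_of_neg
  · apply hgeo.of_nonneg_of_le (fun n => (Real.exp_pos _).le)
    intro n
    rw [← Real.exp_nat_mul, ← Real.exp_add]
    apply Real.exp_le_exp.mpr
    push_cast
    nlinarith [hc.le, (key n).1]
  · apply hgeo.of_nonneg_of_le (fun n => (Real.exp_pos _).le)
    intro n
    rw [← Real.exp_nat_mul, ← Real.exp_add]
    apply Real.exp_le_exp.mpr
    push_cast
    have h2 : |h * (-(n:ℝ)) - Δ| = |h * (n:ℝ) + Δ| := by
      rw [← abs_neg]; ring_nf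
    rw [h2]
    nlinarith [hc.le, (key n).2]

lemma aux_quad_bound (u x : ℝ) :
    ‖Complex.exp (Complex.I * (u : ℂ) * (x : ℂ)) - 1 - Complex.I * (u : ℂ) * (x : ℂ)‖ ≤
      3 * (u * x) ^ 2 := by
  have hnz : ‖Complex.I * (u : ℂ) * (x : ℂ)‖ = |u * x| := by
    simp [map_mul, abs_mul]
  rcases le_or_gt ‖Complex.I * (u : ℂ) * (x : ℂ)‖ 1 with hle | hgt
  · calc ‖Complex.exp (Complex.I * (u : ℂ) * (x : ℂ)) - 1 - Complex.I * (u : ℂ) * (x : ℂ)‖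
        ≤ ‖Complex.I * (u : ℂ) * (x : ℂ)‖ ^ 2 := Complex.norm_exp_sub_one_sub_id_le hle
      _ = (u * x) ^ 2 := by rw [hnz, sq_abs]
      _ ≤ 3 * (u * x) ^ 2 := by nlinarith [sq_nonneg (u*x)]
  · have hre : (Complex.I * (u : ℂ) * (x : ℂ)).re = 0 := by simp
    have hexp : ‖Complex.exp (Complex.I * (u : ℂ) * (x : ℂ))‖ = 1 := by
      rw [Complex.norm_exp, hre, Real.exp_zero]
    have h1 : ‖Complex.exp (Complex.I * (u : ℂ) * (x : ℂ)) - 1 - Complex.I * (u : ℂ) * (x : ℂ)‖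
        ≤ 1 + 1 + ‖Complex.I * (u : ℂ) * (x : ℂ)‖ := by
      calc ‖Complex.exp (Complex.I * (u : ℂ) * (x : ℂ)) - 1 - Complex.I * (u : ℂ) * (x : ℂ)‖
          ≤ ‖Complex.exp (Complex.I * (u : ℂ) * (x : ℂ)) - 1‖
            + ‖Complex.I * (u : ℂ) * (x : ℂ)‖ := norm_sub_le _ _
        _ ≤ 1 + 1 + ‖Complex.I * (u : ℂ) * (x : ℂ)‖ := by
            have := norm_sub_le (Complex.exp (Complex.I * (u : ℂ) * (x : ℂ))) 1
            rw [hexp, norm_one] at this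
            linarith
    have h2 : (1:ℝ) < |u * x| := by rw [← hnz]; exact hgt
    rw [hnz] at h1
    nlinarith [sq_abs (u * x), abs_nonneg (u * x)]

set_option maxHeartbeats 1000000 in
lemma aux_per_term (α τ u c A s : ℝ) (hα0 : 0 < α) (hα2 : α < 2) (hτ : 0 < τ)
    (hcdef : c = min (2 - α) α)
    (hA : A = 3 * u ^ 2 * max 1 (τ ^ 2) + 2 * max 1 (τ⁻¹ ^ 2)) :
    ‖(Complex.exp (Complex.I * (u : ℂ) * (Real.exp s : ℂ)) - 1 -
        Complex.I * (u : ℂ) * (Real.exp s : ℂ) * (if Real.exp s < τ then 1 else 0)) *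
      (Real.exp (-α * s) : ℂ)‖ ≤ A * Real.exp (-c * |s|) := by
  obtain ⟨x, hx⟩ : ∃ x : ℝ, Real.exp s = x := ⟨_, rfl⟩
  have hx0 : 0 < x := hx ▸ Real.exp_pos s
  have hx2 : x ^ 2 = Real.exp (2 * s) := by
    rw [← hx, ← Real.exp_nat_mul]; norm_num
  rw [hx]
  have hc : 0 < c := hcdef ▸ lt_min (by linarith) hα0
  have hApos : 2 * max 1 (τ⁻¹ ^ 2) ≤ A := by
    rw [hA]
    nlinarith [sq_nonneg u, le_max_left (1:ℝ) (τ ^ 2),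
      le_trans zero_le_one (le_max_left (1:ℝ) (τ ^ 2))]
  have hA0 : 0 ≤ A := by
    nlinarith [le_trans zero_le_one (le_max_left (1:ℝ) (τ⁻¹ ^ 2))]
  have hmin : Real.exp (-α * s) * min 1 (x ^ 2) ≤ Real.exp (-c * |s|) := by
    rcases le_or_gt 0 s with hs0 | hs0
    · have h1 : Real.exp (-α * s) * min 1 (x ^ 2) ≤ Real.exp (-α * s) * 1 :=
        mul_le_mul_of_nonneg_left (min_le_left _ _) (Real.exp_pos _).le
      rw [mul_one] at h1
      refine h1.trans (Real.exp_le_exp.mpr ?_)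
      rw [abs_of_nonneg hs0]
      have : c ≤ α := hcdef ▸ min_le_right _ _
      nlinarith
    · have h1 : Real.exp (-α * s) * min 1 (x ^ 2) ≤ Real.exp (-α * s) * x ^ 2 :=
        mul_le_mul_of_nonneg_left (min_le_right _ _) (Real.exp_pos _).le
      refine h1.trans ?_
      rw [hx2, ← Real.exp_add]
      apply Real.exp_le_exp.mpr
      rw [abs_of_neg hs0]
      have : c ≤ 2 - α := hcdef ▸ min_le_left _ _
      nlinarith
  have hnormexp : ‖(Real.exp (-α * s) : ℂ)‖ = Real.exp (-α * s) := by
    rw [Complex.norm_real, Real.norm_eq_abs, abs_of_pos (Real.exp_pos _)]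
  rw [norm_mul, hnormexp]
  have main : ‖Complex.exp (Complex.I * (u : ℂ) * (x : ℂ)) - 1 -
      Complex.I * (u : ℂ) * (x : ℂ) * (if x < τ then 1 else 0)‖ ≤ A * min 1 (x ^ 2) := by
    by_cases hxτ : x < τ
    · rw [if_pos hxτ, mul_one]
      refine (aux_quad_bound u x).trans ?_
      rcases le_or_gt (x ^ 2) 1 with hc1 | hc1
      · rw [min_eq_right hc1]
        have h1 : (1:ℝ) ≤ max 1 (τ ^ 2) := le_max_left _ _
        have h2 : (0:ℝ) ≤ max 1 (τ⁻¹ ^ 2) := le_trans zero_le_one (le_max_left _ _)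
        rw [hA]
        nlinarith [sq_nonneg u, sq_nonneg x, sq_nonneg (u*x)]
      · rw [min_eq_left hc1.le]
        have hτ2 : x ^ 2 ≤ τ ^ 2 := by nlinarith
        have h1 : τ ^ 2 ≤ max 1 (τ ^ 2) := le_max_right _ _
        have h2 : (0:ℝ) ≤ max 1 (τ⁻¹ ^ 2) := le_trans zero_le_one (le_max_left _ _)
        rw [hA]
        nlinarith [sq_nonneg u]
    · rw [if_neg hxτ, mul_zero, sub_zero]
      push_neg at hxτ
      have hb : ‖Complex.exp (Complex.I * (u : ℂ) * (x : ℂ)) - 1‖ ≤ 2 := by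
        have hre : (Complex.I * (u : ℂ) * (x : ℂ)).re = 0 := by simp
        have hexp : ‖Complex.exp (Complex.I * (u : ℂ) * (x : ℂ))‖ = 1 := by
          rw [Complex.norm_exp, hre, Real.exp_zero]
        calc ‖Complex.exp (Complex.I * (u : ℂ) * (x : ℂ)) - 1‖
            ≤ ‖Complex.exp (Complex.I * (u : ℂ) * (x : ℂ))‖ + ‖(1:ℂ)‖ := norm_sub_le _ _
          _ = 2 := by rw [hexp, norm_one]; norm_num
      refine hb.trans ?_
      rcases le_or_gt 1 (x ^ 2) with hc1 | hc1
      · rw [min_eq_left hc1]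
        have h1 : (1:ℝ) ≤ max 1 (τ⁻¹ ^ 2) := le_max_left _ _
        linarith
      · rw [min_eq_right hc1.le]
        have hτ2 : τ ^ 2 ≤ x ^ 2 := by nlinarith
        have h1 : τ⁻¹ ^ 2 ≤ max 1 (τ⁻¹ ^ 2) := le_max_right _ _
        have h2 : τ⁻¹ ^ 2 * τ ^ 2 = 1 := by field_simp
        have hx2pos : 0 < x ^ 2 := by positivity
        have h3 : 2 ≤ 2 * (τ⁻¹ ^ 2) * x ^ 2 := by nlinarith
        nlinarith
  calc ‖Complex.exp (Complex.I * (u : ℂ) * (x : ℂ)) - 1 -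
        Complex.I * (u : ℂ) * (x : ℂ) * (if x < τ then 1 else 0)‖ * Real.exp (-α * s)
      ≤ (A * min 1 (x ^ 2)) * Real.exp (-α * s) :=
        mul_le_mul_of_nonneg_right main (Real.exp_pos _).le
    _ = A * (Real.exp (-α * s) * min 1 (x ^ 2)) := by ring
    _ ≤ A * Real.exp (-c * |s|) := mul_le_mul_of_nonneg_left hmin hA0

theorem levy_series_summable
    (α h Δ τ u : ℝ) (hα : α ∈ Set.Ioo (0 : ℝ) 2) (hh : 0 < h) (hτ : 0 < τ) :
    Summable (fun m : ℤ =>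
      ‖(Complex.exp (Complex.I * (u : ℂ) * (Real.exp (h * (m : ℝ) - Δ) : ℂ)) - 1 -
        Complex.I * (u : ℂ) * (Real.exp (h * (m : ℝ) - Δ) : ℂ) *
          (if Real.exp (h * (m : ℝ) - Δ) < τ then 1 else 0)) *
        (Real.exp (-α * (h * (m : ℝ) - Δ)) : ℂ)‖) := by
  obtain ⟨hα0, hα2⟩ := hα
  have hc : (0:ℝ) < min (2 - α) α := lt_min (by linarith) hα0
  have hsum := (aux_summable_exp_neg_abs (min (2 - α) α) h Δ hc hh).mul_left
    (3 * u ^ 2 * max 1 (τ ^ 2) + 2 * max 1 (τ⁻¹ ^ 2))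
  exact hsum.of_nonneg_of_le (fun m => norm_nonneg _)
    (fun m => aux_per_term α τ u _ _ (h * (m : ℝ) - Δ) hα0 hα2 hτ rfl rfl)
end

section
/- Under the standing assumptions, if {x_n} is a real sequence with x_n → x, then n·I((b_n + x_n)/n) = log( N_n h / √(2π ψ''(α) n) ) + αx + o(1) as n → ∞. -/
open MeasureTheory Filter


section Aux
open Real

lemma pow_le_factorial_mul_exp (k : ℕ) {y : ℝ} (hy : 0 ≤ y) :
    y ^ k ≤ (Nat.factorial k : ℝ) * Real.exp y := by
  have h1 : y ^ k / Nat.factorial k ≤ Real.exp y := by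
    calc y ^ k / Nat.factorial k ≤ ∑ i ∈ Finset.range (k+1), y ^ i / Nat.factorial i
        := Finset.single_le_sum (f := fun i => y ^ i / (Nat.factorial i : ℝ))
            (fun i _ => by positivity) (Finset.self_mem_range_succ k)
      _ ≤ Real.exp y := Real.sum_le_exp_of_nonneg hy _
  have hk : (0:ℝ) < Nat.factorial k := by positivity
  calc y ^ k = (Nat.factorial k : ℝ) * (y ^ k / Nat.factorial k) := by field_simp
    _ ≤ (Nat.factorial k : ℝ) * Real.exp y := by
        exact mul_le_mul_of_nonneg_left h1 hk.le

lemma abs_pow_mul_exp_le (k : ℕ) {s t₀ : ℝ} (hs : |s - t₀| ≤ 1) (v : ℝ) :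
    |v ^ k * Real.exp (s * v)| ≤
      (Nat.factorial k : ℝ) * (Real.exp ((t₀+2) * v) + Real.exp ((t₀-2) * v)) := by
  have h1 : |v ^ k * Real.exp (s * v)| = |v| ^ k * Real.exp (s * v) := by
    rw [abs_mul, abs_pow, abs_of_pos (Real.exp_pos _)]
  rw [h1]
  have h2 : |v| ^ k * Real.exp (s * v) ≤ (Nat.factorial k : ℝ) * Real.exp (|v| + s * v) := by
    rw [Real.exp_add]
    calc |v| ^ k * Real.exp (s * v)
        ≤ ((Nat.factorial k : ℝ) * Real.exp |v|) * Real.exp (s * v) :=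
        mul_le_mul_of_nonneg_right (pow_le_factorial_mul_exp k (abs_nonneg v)) (Real.exp_pos _).le
      _ = (Nat.factorial k : ℝ) * (Real.exp |v| * Real.exp (s * v)) := by ring
  refine h2.trans ?_
  have hk : (0:ℝ) ≤ Nat.factorial k := by positivity
  have h3 : Real.exp (|v| + s * v) ≤ Real.exp ((t₀+2) * v) + Real.exp ((t₀-2) * v) := by
    rcases le_or_gt 0 v with hv | hv
    · have : |v| + s * v ≤ (t₀+2) * v := by
        rw [abs_of_nonneg hv]; nlinarith [abs_le.1 hs]
      calc Real.exp (|v| + s * v) ≤ Real.exp ((t₀+2) * v) := Real.exp_le_exp.2 this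
        _ ≤ _ := le_add_of_nonneg_right (Real.exp_pos _).le
    · have : |v| + s * v ≤ (t₀-2) * v := by
        rw [abs_of_neg hv]; nlinarith [abs_le.1 hs]
      calc Real.exp (|v| + s * v) ≤ Real.exp ((t₀-2) * v) := Real.exp_le_exp.2 this
        _ ≤ _ := le_add_of_nonneg_left (Real.exp_pos _).le
  exact mul_le_mul_of_nonneg_left h3 hk

variable {Ω : Type*} [MeasurableSpace Ω] {P : Measure Ω}

lemma integrable_pow_mul_exp (hVmeas : Measurable V)
    (hcramer : ∀ t : ℝ, Integrable (fun ω => Real.exp (t * V ω)) P) (k : ℕ) (t : ℝ) :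
    Integrable (fun ω => V ω ^ k * Real.exp (t * V ω)) P := by
  refine Integrable.mono' (g := fun ω => (Nat.factorial k : ℝ) *
      (Real.exp ((t+2) * V ω) + Real.exp ((t-2) * V ω))) ?_ ?_ ?_
  · exact (((hcramer (t+2)).add (hcramer (t-2))).const_mul _)
  · exact ((hVmeas.pow_const k).mul ((hVmeas.const_mul t).exp)).aestronglyMeasurable
  · exact Filter.Eventually.of_forall fun ω => by
      simpa only [Real.norm_eq_abs] using abs_pow_mul_exp_le k (s := t) (t₀ := t) (by simp) (V ω)

lemma hasDerivAt_integral_pow_mul_exp (hVmeas : Measurable V)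
    (hcramer : ∀ t : ℝ, Integrable (fun ω => Real.exp (t * V ω)) P) (k : ℕ) (t₀ : ℝ) :
    HasDerivAt (fun t => ∫ ω, V ω ^ k * Real.exp (t * V ω) ∂P)
      (∫ ω, V ω ^ (k+1) * Real.exp (t₀ * V ω) ∂P) t₀ := by
  have := hasDerivAt_integral_of_dominated_loc_of_deriv_le (μ := P)
      (F := fun t ω => V ω ^ k * Real.exp (t * V ω))
      (F' := fun t ω => V ω ^ (k+1) * Real.exp (t * V ω))
      (bound := fun ω => (Nat.factorial (k+1) : ℝ) *
        (Real.exp ((t₀+2) * V ω) + Real.exp ((t₀-2) * V ω)))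
      (x₀ := t₀) (s := Metric.ball t₀ 1) (Metric.ball_mem_nhds t₀ one_pos)
      (Filter.Eventually.of_forall fun t =>
        ((hVmeas.pow_const k).mul ((hVmeas.const_mul t).exp)).aestronglyMeasurable)
      (integrable_pow_mul_exp hVmeas hcramer k t₀)
      (((hVmeas.pow_const (k+1)).mul ((hVmeas.const_mul t₀).exp)).aestronglyMeasurable)
      (Filter.Eventually.of_forall fun ω => fun s hs => by
        simpa only [Real.norm_eq_abs] using abs_pow_mul_exp_le (k+1) (s := s) (t₀ := t₀)
          (le_of_lt (by simpa [Metric.mem_ball, Real.dist_eq] using hs)) (V ω))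
      ((((hcramer (t₀+2)).add (hcramer (t₀-2))).const_mul _))
      (Filter.Eventually.of_forall fun ω => fun s _ => by
        have h1 : HasDerivAt (fun t : ℝ => t * V ω) (V ω) s := hasDerivAt_mul_const (V ω)
        have h2 : HasDerivAt (fun t : ℝ => Real.exp (t * V ω))
            (Real.exp (s * V ω) * V ω) s := h1.exp
        have h3 := h2.const_mul (V ω ^ k)
        exact h3.congr_deriv (by ring))
  exact this.2

end Aux

section CS
open MeasureTheory RealInnerProductSpace

variable {Ω : Type*} [MeasurableSpace Ω] {P : Measure Ω}

lemma sq_integral_mul_lt {f g : Ω → ℝ} (hf : MemLp f 2 P) (hg : MemLp g 2 P)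
    (hg0 : ¬ (g =ᵐ[P] 0))
    (hpar : ∀ r : ℝ, ¬ (f =ᵐ[P] fun ω => r * g ω)) :
    (∫ ω, f ω * g ω ∂P) ^ 2 < (∫ ω, f ω ^ 2 ∂P) * (∫ ω, g ω ^ 2 ∂P) := by
  set F : Lp ℝ 2 P := hf.toLp f with hF
  set G : Lp ℝ 2 P := hg.toLp g with hG
  have hFcoe : (F : Ω → ℝ) =ᵐ[P] f := hf.coeFn_toLp
  have hGcoe : (G : Ω → ℝ) =ᵐ[P] g := hg.coeFn_toLp
  have key : ∀ r : ℝ, F ≠ r • G := by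
    intro r hFG
    apply hpar r
    have h1 : (F : Ω → ℝ) =ᵐ[P] (r • G : Lp ℝ 2 P) := by rw [hFG]
    have h2 : ((r • G : Lp ℝ 2 P) : Ω → ℝ) =ᵐ[P] fun ω => r * g ω := by
      filter_upwards [Lp.coeFn_smul r G, hGcoe] with ω h1 h2
      simp [h1, h2]
    exact hFcoe.symm.trans (h1.trans h2)
  have hGnorm : G ≠ 0 := by
    intro hG0
    apply hg0
    have : (G : Ω → ℝ) =ᵐ[P] 0 := by rw [hG0]; exact Lp.coeFn_zero ℝ 2 P
    exact hGcoe.symm.trans this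
  have hGn : 0 < ‖G‖ := by simpa [norm_pos_iff] using hGnorm
  have upper : ⟪F, G⟫ < ‖F‖ * ‖G‖ := by
    rw [inner_lt_norm_mul_iff_real]
    intro hEq
    refine key (‖G‖⁻¹ * ‖F‖) ?_
    have h3 : F = ‖G‖⁻¹ • (‖F‖ • G) := by
      rw [← hEq, smul_smul, inv_mul_cancel₀ hGn.ne', one_smul]
    rw [smul_smul] at h3
    exact h3
  have lower : -(‖F‖ * ‖G‖) < ⟪F, G⟫ := by
    have h2 : ⟪-F, G⟫ < ‖-F‖ * ‖G‖ := by
      rw [inner_lt_norm_mul_iff_real]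
      intro hEq
      refine key (-(‖G‖⁻¹ * ‖-F‖)) ?_
      have h3 : -F = ‖G‖⁻¹ • (‖-F‖ • G) := by
        rw [← hEq, smul_smul, inv_mul_cancel₀ hGn.ne', one_smul]
      have h4 : F = -(‖G‖⁻¹ • (‖-F‖ • G)) := by rw [← h3, neg_neg]
      rw [smul_smul, ← neg_smul] at h4
      exact h4
    rw [inner_neg_left, norm_neg] at h2
    linarith
  have hsq : ⟪F, G⟫ ^ 2 < (‖F‖ * ‖G‖) ^ 2 := by
    have := sq_lt_sq' lower upper
    simpa [sq_abs] using this
  have hinner : ⟪F, G⟫ = ∫ ω, f ω * g ω ∂P := by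
    rw [L2.inner_def]
    refine integral_congr_ae ?_
    filter_upwards [hFcoe, hGcoe] with ω h1 h2
    simp [h1, h2, RCLike.inner_apply]
    ring
  have hFn : ‖F‖ ^ 2 = ∫ ω, f ω ^ 2 ∂P := by
    rw [← real_inner_self_eq_norm_sq, L2.inner_def]
    refine integral_congr_ae ?_
    filter_upwards [hFcoe] with ω h1
    simp [h1, RCLike.inner_apply, sq]
  have hGsq : ‖G‖ ^ 2 = ∫ ω, g ω ^ 2 ∂P := by
    rw [← real_inner_self_eq_norm_sq, L2.inner_def]
    refine integral_congr_ae ?_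
    filter_upwards [hGcoe] with ω h1
    simp [h1, RCLike.inner_apply, sq]
  calc (∫ ω, f ω * g ω ∂P) ^ 2 = ⟪F, G⟫ ^ 2 := by rw [hinner]
    _ < (‖F‖ * ‖G‖) ^ 2 := hsq
    _ = ‖F‖ ^ 2 * ‖G‖ ^ 2 := by ring
    _ = _ := by rw [hFn, hGsq]

end CS

theorem asymptotics_of_nI
    {Ω : Type*} [MeasurableSpace Ω] (P : Measure Ω) [IsProbabilityMeasure P]
    -- `V` : non-degenerate random variable satisfying the Cramér condition
    (V : Ω → ℝ) (hVmeas : Measurable V)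
    (hcramer : ∀ t : ℝ, Integrable (fun ω => Real.exp (t * V ω)) P)
    (hnondeg : ¬ ∃ c : ℝ, ∀ᵐ ω ∂P, V ω = c)
    -- `V` is lattice with maximal span `h > 0`
    (h : ℝ) (hh : 0 < h)
    (hlat : ∀ᵐ ω ∂P, ∃ m : ℤ, V ω = h * (m : ℝ))
    (hmax : ∀ h' : ℝ, 0 < h' → (∀ᵐ ω ∂P, ∃ m : ℤ, V ω = h' * (m : ℝ)) → h' ≤ h)
    -- `ψ` : log-Laplace transform, `I` : its Legendre–Fenchel transform
    (ψ : ℝ → ℝ) (hψ : ∀ t, ψ t = Real.log (∫ ω, Real.exp (t * V ω) ∂P))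
    (I : ℝ → ℝ) (hI : ∀ β, I β = ⨆ t : ℝ, (β * t - ψ t))
    -- `N_n → ∞` with `λ = lim (1/n) log N_n ∈ (0, λ₂)`
    (N : ℕ → ℕ) (hN : ∀ n, 0 < N n) (hNinf : Tendsto N atTop atTop)
    (lam : ℝ) (hlam : Tendsto (fun n : ℕ => Real.log (N n) / n) atTop (nhds lam))
    (hlam0 : 0 < lam) (hlam2 : lam < 2 * deriv ψ 2 - ψ 2)
    -- `α` the unique solution of `αψ'(α) - ψ(α) = λ`
    (α : ℝ) (hα : α ∈ Set.Ioo (0 : ℝ) 2) (hαlam : α * deriv ψ α - ψ α = lam)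
    -- `b_n = n I⁻¹((1/n) log (N_n h / √(2π ψ''(α) n)))`, `I⁻¹` valued in `(EV, lim_{t→∞} ψ'(t))`
    (b : ℕ → ℝ)
    (hbmem : ∀ n : ℕ, 0 < n → ∃ t : ℝ, 0 < t ∧ deriv ψ t = b n / n)
    (hbval : ∀ n : ℕ, 0 < n → I (b n / n) =
      Real.log ((N n : ℝ) * h / Real.sqrt (2 * Real.pi * deriv (deriv ψ) α * n)) / n)
    (x : ℝ) (xs : ℕ → ℝ) (hxs : Tendsto xs atTop (nhds x)) :
    -- `n I((b_n + x_n)/n) = log(N_n h / √(2π ψ''(α) n)) + αx + o(1)`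
    Tendsto (fun n : ℕ => (n : ℝ) * I ((b n + xs n) / n) -
        (Real.log ((N n : ℝ) * h / Real.sqrt (2 * Real.pi * deriv (deriv ψ) α * n)) + α * x))
      atTop (nhds 0) := by
  classical
  -- the moment integrals
  set Mk : ℕ → ℝ → ℝ := fun k t => ∫ ω, V ω ^ k * Real.exp (t * V ω) ∂P with hMkdef
  have hMk : ∀ (k : ℕ) (t : ℝ), HasDerivAt (Mk k) (Mk (k+1) t) t :=
    fun k t => hasDerivAt_integral_pow_mul_exp hVmeas hcramer k t
  have hM0eq : ∀ t, Mk 0 t = ∫ ω, Real.exp (t * V ω) ∂P := by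
    intro t; simp only [hMkdef, pow_zero, one_mul]
  have hM0pos : ∀ t, 0 < Mk 0 t := by
    intro t
    rw [hM0eq]
    have hP : (Function.support fun ω => Real.exp (t * V ω)) = Set.univ := by
      ext ω; simp [Function.support, (Real.exp_pos _).ne']
    rw [MeasureTheory.integral_pos_iff_support_of_nonneg
      (fun ω => (Real.exp_pos _).le) (hcramer t)]
    rw [hP]
    simp
  -- ψ and its derivatives
  have hψeq : ψ = fun t => Real.log (Mk 0 t) := funext fun t => by rw [hψ t, hM0eq]
  have hψd : ∀ t, HasDerivAt ψ (Mk 1 t / Mk 0 t) t := by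
    intro t
    rw [hψeq]
    exact (hMk 0 t).log (hM0pos t).ne'
  have hψ'eq : deriv ψ = fun t => Mk 1 t / Mk 0 t := funext fun t => (hψd t).deriv
  have hψdd : ∀ t, HasDerivAt ψ (deriv ψ t) t := fun t => by
    rw [hψ'eq]; exact hψd t
  have hψcont : Continuous ψ := by
    rw [continuous_iff_continuousAt]; exact fun t => (hψd t).continuousAt
  have hψ'd : ∀ t, HasDerivAt (deriv ψ)
      ((Mk 2 t * Mk 0 t - Mk 1 t * Mk 1 t) / (Mk 0 t) ^ 2) t := by
    intro t
    rw [hψ'eq]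
    exact (hMk 1 t).div (hMk 0 t) (hM0pos t).ne'
  have hψ'cont : Continuous (deriv ψ) := by
    rw [continuous_iff_continuousAt]; exact fun t => (hψ'd t).continuousAt
  -- strict Cauchy-Schwarz : positive second derivative
  have hCS : ∀ t, Mk 1 t * Mk 1 t < Mk 2 t * Mk 0 t := by
    intro t
    have hfm : Measurable fun ω => V ω * Real.exp ((t/2) * V ω) :=
      hVmeas.mul ((hVmeas.const_mul (t/2)).exp)
    have hgm : Measurable fun ω => Real.exp ((t/2) * V ω) :=
      (hVmeas.const_mul (t/2)).exp
    have hexp2 : ∀ ω, Real.exp ((t/2) * V ω) * Real.exp ((t/2) * V ω)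
        = Real.exp (t * V ω) := by
      intro ω; rw [← Real.exp_add]; ring_nf
    have hf2 : Integrable (fun ω => (V ω * Real.exp ((t/2) * V ω)) ^ 2) P := by
      refine (integrable_pow_mul_exp hVmeas hcramer 2 t).congr ?_
      refine Filter.Eventually.of_forall fun ω => ?_
      linear_combination (-(V ω ^ 2)) * hexp2 ω
    have hg2 : Integrable (fun ω => (Real.exp ((t/2) * V ω)) ^ 2) P := by
      refine (hcramer t).congr ?_
      refine Filter.Eventually.of_forall fun ω => ?_
      linear_combination (-1 : ℝ) * hexp2 ω
    have hfL : MemLp (fun ω => V ω * Real.exp ((t/2) * V ω)) 2 P :=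
      (memLp_two_iff_integrable_sq hfm.aestronglyMeasurable).2 hf2
    have hgL : MemLp (fun ω => Real.exp ((t/2) * V ω)) 2 P :=
      (memLp_two_iff_integrable_sq hgm.aestronglyMeasurable).2 hg2
    have hg0 : ¬ ((fun ω => Real.exp ((t/2) * V ω)) =ᵐ[P] 0) := by
      intro hcon
      have : ∀ᵐ ω ∂P, Real.exp ((t/2) * V ω) = 0 := hcon
      have h2 : ∀ᵐ (ω : Ω) ∂P, False := by
        filter_upwards [this] with ω hω
        exact (Real.exp_pos ((t/2) * V ω)).ne' hω
      rcases h2.exists with ⟨ω, hω⟩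
      exact hω
    have hpar : ∀ r : ℝ, ¬ ((fun ω => V ω * Real.exp ((t/2) * V ω)) =ᵐ[P]
        fun ω => r * Real.exp ((t/2) * V ω)) := by
      intro r hcon
      apply hnondeg
      refine ⟨r, ?_⟩
      filter_upwards [hcon] with ω hω
      have he : Real.exp ((t/2) * V ω) ≠ 0 := (Real.exp_pos ((t/2) * V ω)).ne'
      exact mul_right_cancel₀ he hω
    have hmain := sq_integral_mul_lt hfL hgL hg0 hpar
    have e1 : (∫ ω, (V ω * Real.exp ((t/2) * V ω)) * Real.exp ((t/2) * V ω) ∂P) = Mk 1 t := by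
      refine integral_congr_ae (Filter.Eventually.of_forall fun ω => ?_)
      linear_combination (V ω) * hexp2 ω
    have e2 : (∫ ω, (V ω * Real.exp ((t/2) * V ω)) ^ 2 ∂P) = Mk 2 t := by
      refine integral_congr_ae (Filter.Eventually.of_forall fun ω => ?_)
      linear_combination (V ω ^ 2) * hexp2 ω
    have e3 : (∫ ω, (Real.exp ((t/2) * V ω)) ^ 2 ∂P) = Mk 0 t := by
      refine integral_congr_ae (Filter.Eventually.of_forall fun ω => ?_)
      linear_combination hexp2 ω
    rw [e1, e2, e3] at hmain
    nlinarith [hmain]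
  have hψ''pos : ∀ t, 0 < deriv (deriv ψ) t := by
    intro t
    rw [(hψ'd t).deriv]
    exact div_pos (by linarith [hCS t]) (pow_pos (hM0pos t) 2)
  have hmono : StrictMono (deriv ψ) := strictMono_of_deriv_pos hψ''pos
  -- supporting lines
  have hsupp : ∀ t u, ψ t + deriv ψ t * (u - t) ≤ ψ u := by
    intro t u
    rcases lt_trichotomy t u with htu | htu | htu
    · obtain ⟨c, hc, hceq⟩ := exists_hasDerivAt_eq_slope ψ (deriv ψ) htu
        hψcont.continuousOn (fun y _ => hψdd y)
      have h1 : deriv ψ t ≤ deriv ψ c := (hmono hc.1).le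
      have h2 : deriv ψ c * (u - t) = ψ u - ψ t := by
        rw [hceq]; exact div_mul_cancel₀ _ (sub_ne_zero.2 (ne_of_gt htu))
      nlinarith
    · simp [htu]
    · obtain ⟨c, hc, hceq⟩ := exists_hasDerivAt_eq_slope ψ (deriv ψ) htu
        hψcont.continuousOn (fun y _ => hψdd y)
      have h1 : deriv ψ c ≤ deriv ψ t := (hmono hc.2).le
      have h2 : deriv ψ c * (t - u) = ψ t - ψ u := by
        rw [hceq]; exact div_mul_cancel₀ _ (sub_ne_zero.2 (ne_of_gt htu))
      nlinarith
  have hsuppstrict : ∀ t u, t < u → ψ u - ψ t < deriv ψ u * (u - t) := by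
    intro t u htu
    obtain ⟨c, hc, hceq⟩ := exists_hasDerivAt_eq_slope ψ (deriv ψ) htu
      hψcont.continuousOn (fun y _ => hψdd y)
    have h1 : deriv ψ c < deriv ψ u := hmono hc.2
    have h2 : deriv ψ c * (u - t) = ψ u - ψ t := by
      rw [hceq]; exact div_mul_cancel₀ _ (sub_ne_zero.2 (ne_of_gt htu))
    nlinarith
  -- the function g(t) = tψ'(t) - ψ(t)
  set gf : ℝ → ℝ := fun t => t * deriv ψ t - ψ t with hgfdef
  have hgmono : ∀ t u, 0 ≤ t → t < u → gf t < gf u := by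
    intro t u ht htu
    have h1 := hsuppstrict t u htu
    have h2 : deriv ψ t ≤ deriv ψ u := (hmono htu).le
    simp only [hgfdef]
    nlinarith
  -- representation of the rate function
  have hIrep : ∀ t, I (deriv ψ t) = gf t := by
    intro t
    rw [hI]
    refine le_antisymm (ciSup_le fun u => ?_) ?_
    · have := hsupp t u
      simp only [hgfdef]
      nlinarith
    · have hb : BddAbove (Set.range fun u => deriv ψ t * u - ψ u) := by
        refine ⟨gf t, ?_⟩
        rintro y ⟨u, rfl⟩
        have := hsupp t u
        simp only [hgfdef]
        nlinarith
      have h2 := le_ciSup hb t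
      have h3 : deriv ψ t * t - ψ t = gf t := by simp only [hgfdef]; ring
      linarith
  have hIineq : ∀ t u, deriv ψ t * u - ψ u ≤ I (deriv ψ t) := by
    intro t u
    rw [hIrep t]
    have := hsupp t u
    simp only [hgfdef]
    nlinarith
  -- abbreviation for the second derivative at α and the log term
  set c : ℝ := deriv (deriv ψ) α with hcdef
  have hcpos : 0 < c := hψ''pos α
  set L : ℕ → ℝ := fun n => Real.log ((N n : ℝ) * h / Real.sqrt (2 * Real.pi * c * n))
    with hLdef
  -- L n / n → lam
  have hLdiv : Tendsto (fun n : ℕ => L n / n) atTop (nhds lam) := by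
    have h2a : Tendsto (fun n : ℕ => Real.log n / n) atTop (nhds 0) := by
      have := Real.isLittleO_log_id_atTop.tendsto_div_nhds_zero
      have h3 := this.comp (tendsto_natCast_atTop_atTop (R := ℝ))
      exact h3
    have h1 : Tendsto (fun n : ℕ => Real.log h / n) atTop (nhds 0) :=
      Tendsto.div_atTop tendsto_const_nhds tendsto_natCast_atTop_atTop
    have h2b : Tendsto (fun n : ℕ => Real.log (2 * Real.pi * c) / n) atTop (nhds 0) :=
      Tendsto.div_atTop tendsto_const_nhds tendsto_natCast_atTop_atTop
    have hform : Tendsto (fun n : ℕ => Real.log (N n) / n + Real.log h / n -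
        (Real.log (2 * Real.pi * c) / n + Real.log n / n) / 2) atTop (nhds lam) := by
      have := (hlam.add h1).sub ((h2b.add h2a).div_const 2)
      simpa using this
    refine Tendsto.congr' ?_ hform
    filter_upwards [eventually_gt_atTop 0] with n hn
    have hn0 : (0:ℝ) < n := by exact_mod_cast hn
    have hNpos : (0:ℝ) < (N n : ℝ) := by exact_mod_cast hN n
    have hprod : (0:ℝ) < 2 * Real.pi * c * n := by positivity
    have hsq : (0:ℝ) < Real.sqrt (2 * Real.pi * c * n) := Real.sqrt_pos.2 hprod
    have hLn : L n = Real.log (N n) + Real.log h -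
        (Real.log (2 * Real.pi * c) + Real.log n) / 2 := by
      simp only [hLdef]
      rw [Real.log_div (by positivity) hsq.ne']
      rw [Real.log_mul hNpos.ne' hh.ne']
      rw [Real.log_sqrt hprod.le]
      rw [Real.log_mul (by positivity) hn0.ne']
    rw [hLn]
    field_simp
  -- the sequence T with ψ'(T n) = b n / n
  set T : ℕ → ℝ := fun n => if hn : 0 < n then (hbmem n hn).choose else α with hTdef
  have hT : ∀ n (hn : 0 < n), 0 < T n ∧ deriv ψ (T n) = b n / n := by
    intro n hn
    simp only [hTdef, dif_pos hn]
    exact ⟨(hbmem n hn).choose_spec.1, (hbmem n hn).choose_spec.2⟩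
  have hgT : ∀ᶠ n in atTop, gf (T n) = L n / n := by
    filter_upwards [eventually_gt_atTop 0] with n hn
    rw [← hIrep (T n), (hT n hn).2, hbval n hn]
  have hgTlim : Tendsto (fun n => gf (T n)) atTop (nhds lam) :=
    Tendsto.congr' (hgT.mono fun n hn => hn.symm) hLdiv
  have hglam : gf α = lam := hαlam
  have hTlim : Tendsto T atTop (nhds α) := by
    rw [tendsto_order]
    constructor
    · intro a ha
      rcases lt_or_ge a 0 with ha0 | ha0
      · filter_upwards [eventually_gt_atTop 0] with n hn
        exact lt_trans ha0 (hT n hn).1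
      · have h1 : gf a < lam := hglam ▸ hgmono a α ha0 ha
        filter_upwards [hgTlim.eventually (eventually_gt_nhds h1),
          eventually_gt_atTop 0] with n h2 h3
        by_contra hle
        rcases (not_lt.1 hle).lt_or_eq with h4 | h4
        · exact absurd (hgmono (T n) a (hT n h3).1.le h4) (by linarith)
        · rw [h4] at h2; linarith
    · intro a ha
      have h1 : lam < gf a := hglam ▸ hgmono α a hα.1.le ha
      filter_upwards [hgTlim.eventually (eventually_lt_nhds h1),
        eventually_gt_atTop 0] with n h2 h3
      by_contra hle
      rcases (not_lt.1 hle).lt_or_eq with h4 | h4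
      · exact absurd (hgmono a (T n) (by linarith [hα.1]) h4) (by linarith)
      · rw [← h4] at h2; linarith
  -- limits of b n / n and (b n + xs n)/n
  have hβlim : Tendsto (fun n => b n / n) atTop (nhds (deriv ψ α)) := by
    refine Tendsto.congr' ?_ ((hψ'cont.tendsto α).comp hTlim)
    filter_upwards [eventually_gt_atTop 0] with n hn
    exact (hT n hn).2
  have hxslim : Tendsto (fun n : ℕ => xs n / n) atTop (nhds 0) :=
    Tendsto.div_atTop hxs tendsto_natCast_atTop_atTop
  have hβ'lim : Tendsto (fun n : ℕ => (b n + xs n) / n) atTop (nhds (deriv ψ α)) := by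
    have := hβlim.add hxslim
    rw [add_zero] at this
    refine Tendsto.congr' ?_ this
    filter_upwards [] with n
    rw [add_div]
  -- the sequence U with ψ'(U n) = (b n + xs n)/n eventually
  set U : ℕ → ℝ := fun n => if hn : ∃ u, deriv ψ u = (b n + xs n) / n then hn.choose else α
    with hUdef
  have hUev : ∀ᶠ n in atTop, deriv ψ (U n) = (b n + xs n) / n := by
    have hIoo : Set.Ioo (deriv ψ (α - 1)) (deriv ψ (α + 1)) ∈ nhds (deriv ψ α) :=
      Ioo_mem_nhds (hmono (by linarith)) (hmono (by linarith))
    filter_upwards [hβ'lim hIoo] with n hn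
    have hsub := intermediate_value_Ioo (by linarith : α - 1 ≤ α + 1) hψ'cont.continuousOn
    obtain ⟨u, _, hu2⟩ := hsub hn
    have hex : ∃ u, deriv ψ u = (b n + xs n) / n := ⟨u, hu2⟩
    simp only [hUdef, dif_pos hex]
    exact hex.choose_spec
  have hUlim : Tendsto U atTop (nhds α) := by
    rw [tendsto_order]
    constructor
    · intro a ha
      have h1 : deriv ψ a < deriv ψ α := hmono ha
      filter_upwards [hUev, hβ'lim.eventually (eventually_gt_nhds h1)] with n h2 h3
      by_contra hle
      have h4 : deriv ψ (U n) ≤ deriv ψ a := hmono.monotone (not_lt.1 hle)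
      rw [h2] at h4
      linarith
    · intro a ha
      have h1 : deriv ψ α < deriv ψ a := hmono ha
      filter_upwards [hUev, hβ'lim.eventually (eventually_lt_nhds h1)] with n h2 h3
      by_contra hle
      have h4 : deriv ψ a ≤ deriv ψ (U n) := hmono.monotone (not_lt.1 hle)
      rw [h2] at h4
      linarith
  -- final squeeze
  have hTx : Tendsto (fun n => T n * xs n - α * x) atTop (nhds 0) := by
    have := (hTlim.mul hxs).sub (tendsto_const_nhds (x := α * x))
    simpa using this
  have hUx : Tendsto (fun n => U n * xs n - α * x) atTop (nhds 0) := by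
    have := (hUlim.mul hxs).sub (tendsto_const_nhds (x := α * x))
    simpa using this
  refine tendsto_of_tendsto_of_tendsto_of_le_of_le' hTx hUx ?_ ?_
  · -- lower bound
    filter_upwards [hUev, eventually_gt_atTop 0] with n h2 h3
    have hn0 : (0:ℝ) < n := by exact_mod_cast h3
    have e2 : Real.log ((N n : ℝ) * h / Real.sqrt (2 * Real.pi * c * n))
        = (n:ℝ) * gf (T n) := by
      have := hbval n h3
      rw [← (hT n h3).2, hIrep] at this
      rw [this]
      field_simp
    have i1 : deriv ψ (U n) * T n - ψ (T n) ≤ I (deriv ψ (U n)) := hIineq (U n) (T n)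
    rw [hIrep (U n)] at i1
    rw [h2] at i1
    have e1 : I ((b n + xs n) / n) = gf (U n) := by rw [← h2, hIrep]
    rw [e1, e2]
    have hgTn : gf (T n) = T n * (b n / n) - ψ (T n) := by
      simp only [hgfdef, (hT n h3).2]
    have hdiff : (xs n / n) * T n ≤ gf (U n) - gf (T n) := by
      rw [hgTn]
      have hbd : (b n + xs n) / (n:ℝ) = b n / n + xs n / n := add_div _ _ _
      rw [hbd] at i1
      have hexp : (b n / (n:ℝ) + xs n / n) * T n
          = T n * (b n / n) + (xs n / n) * T n := by ring
      rw [hexp] at i1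
      linarith [i1]
    have hmul := mul_le_mul_of_nonneg_left hdiff hn0.le
    have hcl : (n:ℝ) * ((xs n / n) * T n) = T n * xs n := by
      field_simp
    rw [hcl] at hmul
    have hdist : (n:ℝ) * (gf (U n) - gf (T n))
        = (n:ℝ) * gf (U n) - (n:ℝ) * gf (T n) := by ring
    rw [hdist] at hmul
    linarith [hmul]
  · -- upper bound
    filter_upwards [hUev, eventually_gt_atTop 0] with n h2 h3
    have hn0 : (0:ℝ) < n := by exact_mod_cast h3
    have e2 : Real.log ((N n : ℝ) * h / Real.sqrt (2 * Real.pi * c * n))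
        = (n:ℝ) * gf (T n) := by
      have := hbval n h3
      rw [← (hT n h3).2, hIrep] at this
      rw [this]
      field_simp
    have i2 : deriv ψ (T n) * U n - ψ (U n) ≤ I (deriv ψ (T n)) := hIineq (T n) (U n)
    rw [hIrep (T n)] at i2
    rw [(hT n h3).2] at i2
    have e1 : I ((b n + xs n) / n) = gf (U n) := by rw [← h2, hIrep]
    rw [e1, e2]
    have hgUn : gf (U n) = U n * ((b n + xs n) / n) - ψ (U n) := by
      simp only [hgfdef, h2]
    have hdiff : gf (U n) - gf (T n) ≤ (xs n / n) * U n := by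
      rw [hgUn]
      have hbd : (b n + xs n) / (n:ℝ) = b n / n + xs n / n := add_div _ _ _
      rw [hbd]
      have hcomm : b n / (n:ℝ) * U n = U n * (b n / n) := by ring
      rw [hcomm] at i2
      have hexp : U n * (b n / (n:ℝ) + xs n / n)
          = U n * (b n / n) + (xs n / n) * U n := by ring
      rw [hexp]
      linarith [i2]
    have hmul := mul_le_mul_of_nonneg_left hdiff hn0.le
    have hcl : (n:ℝ) * ((xs n / n) * U n) = U n * xs n := by
      field_simp
    rw [hcl] at hmul
    have hdist : (n:ℝ) * (gf (U n) - gf (T n))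
        = (n:ℝ) * gf (U n) - (n:ℝ) * gf (T n) := by ring
    rw [hdist] at hmul
    linarith [hmul]
end
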